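/- arXiv:2109.02361 — 2 statements merged into one kernel-verified Lean document; each statement's English description precedes it below -/
import Mathlib

section
/- In a finite-dimensional irreducible representation V of X(osp_{1|2n}), a highest vector (a nonzero vector ξ with t_{ij}(u)ξ = 0 for all 1 ≤ i < j ≤ 2n+1 and t_{ii}(u)ξ = λ_i(u)ξ for some scalar series λ_i(u)) is determined uniquely up to a constant factor. -/
/-!
Common definitions for the Yangian `X(osp_{1|2n})` associated with the orthosymplectic
Lie superalgebra `osp(1|2n)`, following Molev, "Representations of the Yangians
associated with Lie superalgebras osp(1|2n)".

Indices are 0-based: the index set {1,…,2n+1} of the paper corresponds to `Fin (2n+1)`,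
the involution i ↦ i′ = 2n−i+2 corresponds to `pr : i ↦ 2n−i`, the parity ī is 1 unless
i is the middle index `n`, and τ_i = 1 for i ≤ n and −1 for i > n.

The extended Yangian is presented by the coefficients `t_{ij}^{(r)}` (`r ≥ 1`) of the series
`t_{ij}(u) = δ_{ij} + Σ_{r≥1} t_{ij}^{(r)} u^{−r}`, subject to the defining RTT relations,
written in the equivalent explicit component form (formula (2.9) of the paper), with
denominators cleared.  Working with the variables `x = u⁻¹` and `y = v⁻¹`, so that
`u − v = (y−x)/(xy)` and `u − v − κ = (y − x − κxy)/(xy)`, the relation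
`[t_{ij}(u), t_{kl}(v)] = (u−v)⁻¹ (⋯) − (u−v−κ)⁻¹ (⋯)` becomes the power series identity
`relL = relR` below, and the Yangian is the quotient of the free algebra by the
coefficient-wise relations.
-/

noncomputable section

namespace OspYangian

open Finset

/-- The size of the index set: `2n+1`. -/
abbrev NN (n : ℕ) : ℕ := 2 * n + 1

/-- Convenient constructor for indices. -/
def idx {n : ℕ} (i : ℕ) (h : i < 2 * n + 1) : Fin (NN n) := ⟨i, h⟩

/-- The involution `i ↦ i′` (0-based: `i ↦ 2n − i`). -/
def pr {n : ℕ} (i : Fin (NN n)) : Fin (NN n) := idx (2 * n - (i : ℕ)) (by omega)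

/-- The parity `ī`: `0` for the (even) middle index, `1` for the (odd) remaining ones. -/
def pb {n : ℕ} (i : Fin (NN n)) : ℕ := if (i : ℕ) = n then 0 else 1

/-- The sign `τ_i`: `1` for `i ≤ n`, `−1` for `i > n` (0-based). -/
def tau {n : ℕ} (i : Fin (NN n)) : ℂ := if (i : ℕ) ≤ n then 1 else -1

/-- `κ = −n − 1/2`. -/
def kappa (n : ℕ) : ℂ := -(n : ℂ) - 1 / 2

/-- The sign `(−1)^m`. -/
def sg (m : ℕ) : ℂ := (-1 : ℂ) ^ m

section GenericSeries

variable {I : Type*} {A : Type*} [Ring A] [Algebra ℂ A]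

/-- Given a family `t i j : ℕ → A` of coefficients of series `t_{ij}(u) = Σ_r t_{ij}^{(r)} u^{−r}`,
the series `t_{ij}(u)` as an element of `A⟦x⟧⟦y⟧` (constant in `y`), where `x = u⁻¹`. -/
def Tx (t : I → I → ℕ → A) (i j : I) : PowerSeries (PowerSeries A) :=
  PowerSeries.C (PowerSeries.mk (t i j))

/-- The series `t_{ij}(v)` as an element of `A⟦x⟧⟦y⟧` (constant in `x`), where `y = v⁻¹`. -/
def Ty (t : I → I → ℕ → A) (i j : I) : PowerSeries (PowerSeries A) :=
  PowerSeries.mk fun r => PowerSeries.C (t i j r)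

/-- The element `x = u⁻¹` of `A⟦x⟧⟦y⟧`. -/
def Xv (A : Type*) [Ring A] : PowerSeries (PowerSeries A) :=
  PowerSeries.C PowerSeries.X

/-- The element `y = v⁻¹` of `A⟦x⟧⟦y⟧`. -/
def Yv (A : Type*) [Ring A] : PowerSeries (PowerSeries A) := PowerSeries.X

end GenericSeries

section RTT

variable {A : Type*} [Ring A] [Algebra ℂ A]

/-- Left-hand side of the defining relation of `X(osp_{1|2n})` for a family `t` of series
coefficients: `(u−v)(u−v−κ)·[t_{ij}(u), t_{kl}(v)]` (super-commutator), multiplied by `(xy)²`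
to clear denominators; here `x = u⁻¹`, `y = v⁻¹`. -/
def relL (n : ℕ) (t : Fin (NN n) → Fin (NN n) → ℕ → A) (i j k l : Fin (NN n)) :
    PowerSeries (PowerSeries A) :=
  (Yv A - Xv A) * (Yv A - Xv A - kappa n • (Xv A * Yv A)) *
    (Tx t i j * Ty t k l - sg ((pb i + pb j) * (pb k + pb l)) • (Ty t k l * Tx t i j))

/-- Right-hand side of the defining relation of `X(osp_{1|2n})`:
`(u−v−κ)·A − (u−v)·B` multiplied by `(xy)²`, where
`A = (−1)^{īj̄+īk̄+j̄k̄} (t_{kj}(u)t_{il}(v) − t_{kj}(v)t_{il}(u))` and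
`B = δ_{k i′} Σ_p (−1)^{ī+īj̄+j̄p̄} τ_iτ_p t_{pj}(u)t_{p′l}(v)
   − δ_{l j′} Σ_p (−1)^{j̄+p̄+īk̄+j̄k̄+īp̄} τ_jτ_p t_{kp′}(v)t_{ip}(u)`. -/
def relR (n : ℕ) (t : Fin (NN n) → Fin (NN n) → ℕ → A) (i j k l : Fin (NN n)) :
    PowerSeries (PowerSeries A) :=
  (Xv A * Yv A) * (Yv A - Xv A - kappa n • (Xv A * Yv A)) *
    (sg (pb i * pb j + pb i * pb k + pb j * pb k) •
      (Tx t k j * Ty t i l - Ty t k j * Tx t i l))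
  - (Xv A * Yv A) * (Yv A - Xv A) *
    ((if k = pr i then
        ∑ p : Fin (NN n), (sg (pb i + pb i * pb j + pb j * pb p) * tau i * tau p) •
          (Tx t p j * Ty t (pr p) l)
      else 0)
     - (if l = pr j then
        ∑ p : Fin (NN n), (sg (pb j + pb p + pb i * pb k + pb j * pb k + pb i * pb p)
            * tau j * tau p) • (Ty t k (pr p) * Tx t i p)
      else 0))

/-- A family of matrix elements `t i j : ℕ → A` (the coefficients of series `t_{ij}(u)`)
satisfies the defining `RTT`-relation of `X(osp_{1|2n})`. -/
def SatisfiesRTT (n : ℕ) (t : Fin (NN n) → Fin (NN n) → ℕ → A) : Prop :=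
  ∀ i j k l : Fin (NN n), relL n t i j k l = relR n t i j k l

end RTT

/-- The free algebra on the generators `t_{ij}^{(r)}`, `r ≥ 1` (the last component `r : ℕ`
encodes the generator `t_{ij}^{(r+1)}`). -/
abbrev FA (n : ℕ) := FreeAlgebra ℂ (Fin (NN n) × Fin (NN n) × ℕ)

/-- The coefficients of the generating series `t_{ij}(u)` in the free algebra:
`t_{ij}^{(0)} = δ_{ij}` and `t_{ij}^{(r)}` is a free generator for `r ≥ 1`. -/
def fgen (n : ℕ) : Fin (NN n) → Fin (NN n) → ℕ → FA n := fun i j r =>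
  if r = 0 then (if i = j then 1 else 0) else FreeAlgebra.ι ℂ (i, j, r - 1)

/-- The defining relations of the extended Yangian: all coefficients of `relL` are identified
with the corresponding coefficients of `relR`. -/
def yrel (n : ℕ) : FA n → FA n → Prop := fun a b =>
  ∃ (i j k l : Fin (NN n)) (r s : ℕ),
    a = PowerSeries.coeff s
          (PowerSeries.coeff r (relL n (fgen n) i j k l)) ∧
    b = PowerSeries.coeff s
          (PowerSeries.coeff r (relR n (fgen n) i j k l))

/-- The extended Yangian `X(osp_{1|2n})`. -/
abbrev XX (n : ℕ) := RingQuot (yrel n)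

/-- The coefficient `t_{ij}^{(r)}` of the series `t_{ij}(u) = Σ_{r≥0} t_{ij}^{(r)} u^{−r}`
in the extended Yangian (`TT n i j 0 = δ_{ij}`). -/
def TT (n : ℕ) (i j : Fin (NN n)) (r : ℕ) : XX n :=
  RingQuot.mkAlgHom ℂ (yrel n) (fgen n i j r)

section Shift

variable {M : Type*} [AddCommMonoid M] [Module ℂ M]

/-- The coefficient of `u^{−s}` in `f(u+a)`, where `f(u) = Σ_r c r · u^{−r}`:
`Σ_{r≤s} (−1)^{s−r} C(s−1, s−r) a^{s−r} · c r`. -/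
def shiftCoeff (a : ℂ) (c : ℕ → M) (s : ℕ) : M :=
  ∑ r ∈ Finset.range (s + 1),
    ((-1 : ℂ) ^ (s - r) * (Nat.choose (s - 1) (s - r) : ℂ) * a ^ (s - r)) • c r

/-- For a power series `f` in `u⁻¹`, the power series of `f(u+a)` in `u⁻¹`. -/
def shiftSeries (a : ℂ) (f : PowerSeries ℂ) : PowerSeries ℂ :=
  PowerSeries.mk fun s => shiftCoeff a (fun r => PowerSeries.coeff r f) s

end Shift

/-- The consistency conditions (3.4) of the paper:
`λ_i(u) λ_{i′}(u+n−i+1/2) = λ_{i+1}(u) λ_{(i+1)′}(u+n−i+1/2)` for `i = 1,…,n`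
(0-based: positions `i` and `i+1` with `i < n`, shift `n − i − 1/2`). -/
def Consistent (n : ℕ) (lam : Fin (NN n) → PowerSeries ℂ) : Prop :=
  ∀ (i : ℕ) (h : i < n),
    lam (idx i (by omega)) *
        shiftSeries ((n : ℂ) - (i : ℂ) - 1 / 2) (lam (pr (idx i (by omega)))) =
      lam (idx (i + 1) (by omega)) *
        shiftSeries ((n : ℂ) - (i : ℂ) - 1 / 2) (lam (pr (idx (i + 1) (by omega))))

/-- `V` is a highest weight module over `X(osp_{1|2n})` with highest vector `xi` and
highest weight `lam` (a tuple of series in `1 + u⁻¹ℂ[[u⁻¹]]`): `xi` is nonzero, generates `V`,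
is annihilated by all `t_{ij}(u)` with `i < j` and is an eigenvector of all `t_{ii}(u)`
with eigenvalue the series `λ_i(u)`. -/
def IsHighestWeight (n : ℕ) {V : Type*} [AddCommGroup V] [Module ℂ V] [Module (XX n) V]
    (xi : V) (lam : Fin (NN n) → PowerSeries ℂ) : Prop :=
  xi ≠ 0 ∧ Submodule.span (XX n) {xi} = ⊤ ∧
  (∀ i j : Fin (NN n), i < j → ∀ r : ℕ, TT n i j r • xi = 0) ∧
  (∀ (i : Fin (NN n)) (r : ℕ), TT n i i r • xi = (PowerSeries.coeff r (lam i)) • xi) ∧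
  (∀ i : Fin (NN n), PowerSeries.constantCoeff (lam i) = 1)

/-- The generators of the left ideal defining the Verma module `M(λ(u))`: all coefficients
`t_{ij}^{(r)}`, `r ≥ 1`, with `i < j`, and all `t_{ii}^{(r)} − λ_i^{(r)}`, `r ≥ 1`. -/
def vermaGens (n : ℕ) (lam : Fin (NN n) → PowerSeries ℂ) : Set (XX n) :=
  {x | (∃ (i j : Fin (NN n)) (r : ℕ), i < j ∧ x = TT n i j (r + 1)) ∨
       (∃ (i : Fin (NN n)) (r : ℕ),
         x = TT n i i (r + 1) - algebraMap ℂ (XX n) (PowerSeries.coeff (r + 1) (lam i)))}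

/-- The left ideal defining the Verma module `M(λ(u))`. -/
def vermaIdeal (n : ℕ) (lam : Fin (NN n) → PowerSeries ℂ) : Submodule (XX n) (XX n) :=
  Submodule.span (XX n) (vermaGens n lam)

/-- The Verma module `M(λ(u))`. -/
abbrev Verma (n : ℕ) (lam : Fin (NN n) → PowerSeries ℂ) :=
  XX n ⧸ vermaIdeal n lam

/-- The sum of all proper submodules of the Verma module `M(λ(u))` (its unique maximal
proper submodule). -/
def vermaRad (n : ℕ) (lam : Fin (NN n) → PowerSeries ℂ) : Submodule (XX n) (Verma n lam) :=
  sSup {W : Submodule (XX n) (Verma n lam) | W ≠ ⊤}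

/-- The irreducible quotient `L(λ(u))` of the Verma module `M(λ(u))`. -/
abbrev Lmod (n : ℕ) (lam : Fin (NN n) → PowerSeries ℂ) :=
  Verma n lam ⧸ vermaRad n lam

/-- The Drinfeld polynomial condition `λ₊(u)/λ₋(u) = P(u+1)/P(u)` for a pair of series
`λ₋(u), λ₊(u) ∈ 1 + u⁻¹ℂ[[u⁻¹]]` and a polynomial `P`, i.e. the equality of series
`λ₊(u)·u^{−deg P}·P(u) = λ₋(u)·u^{−deg P}·P(u+1)`; here `u^{−deg P}·P(u)` is the reversed
polynomial `P.reverse` regarded as a power series in `u⁻¹`. -/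
def DrinfeldPair (lamLow lamHigh : PowerSeries ℂ) (P : Polynomial ℂ) : Prop :=
  lamHigh * ((P.reverse : Polynomial ℂ) : PowerSeries ℂ) =
    lamLow * (((P.comp (Polynomial.X + 1)).reverse : Polynomial ℂ) : PowerSeries ℂ)

end OspYangian
namespace OspYangian

open Finset

section ModuleLemmas

variable {n : ℕ} {V : Type*} [AddCommGroup V] [Module ℂ V] [Module (XX n) V]
  [IsScalarTower ℂ (XX n) V]

theorem smul_comm_alg (c : ℂ) (x : XX n) (v : V) : x • (c • v) = c • (x • v) := by
  rw [← algebraMap_smul (XX n) c v, ← mul_smul, ← Algebra.commutes, mul_smul,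
    algebraMap_smul]

end ModuleLemmas

section Vplus

variable (n : ℕ) (V : Type*) [AddCommGroup V] [Module ℂ V] [Module (XX n) V]
  [IsScalarTower ℂ (XX n) V]

/-- The subspace `V⁺ = {η ∈ V | t_{1j}(u)η = 0 (j > 1), t_{i1′}(u)η = 0 (i < 1′)}`
(0-based: first index `0`, last index `2n`). -/
def Vplus : Set V :=
  {η | (∀ j : Fin (NN n), 0 < (j : ℕ) → ∀ r : ℕ, TT n (idx 0 (by omega)) j r • η = 0) ∧
       (∀ i : Fin (NN n), (i : ℕ) < 2 * n → ∀ r : ℕ, TT n i (idx (2 * n) (by omega)) r • η = 0)}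

/-- `V⁺` as a `ℂ`-subspace of `V`. -/
def VplusSub : Submodule ℂ V where
  carrier := Vplus n V
  zero_mem' := ⟨fun _ _ _ => smul_zero _, fun _ _ _ => smul_zero _⟩
  add_mem' := by
    rintro a b ⟨h1, h2⟩ ⟨g1, g2⟩
    exact ⟨fun j hj r => by rw [smul_add, h1 j hj r, g1 j hj r, add_zero],
           fun i hi r => by rw [smul_add, h2 i hi r, g2 i hi r, add_zero]⟩
  smul_mem' := by
    rintro c x ⟨h1, h2⟩
    exact ⟨fun j hj r => by rw [smul_comm_alg, h1 j hj r, smul_zero],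
           fun i hi r => by rw [smul_comm_alg, h2 i hi r, smul_zero]⟩

/-- The subspace `V⁰ = {η ∈ V | t_{ij}(u)η = 0 for all i < j}`. -/
def Vzero : Set V :=
  {η | ∀ i j : Fin (NN n), i < j → ∀ r : ℕ, TT n i j r • η = 0}

end Vplus

/-- The embedding of index sets `{1,…,2n+1} ↪ {1,…,2(n+1)+1}`, `i ↦ i+1`, used in the
reduction from `X(osp_{1|2(n+1)})` to `X(osp_{1|2n})`. -/
def emb {m : ℕ} (i : Fin (NN m)) : Fin (NN (m + 1)) :=
  idx ((i : ℕ) + 1) (by have h : (i : ℕ) < 2 * m + 1 := i.isLt; omega)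

section Yangian

/-- `φ` is the automorphism `t_{ij}(u) ↦ f(u) t_{ij}(u)` of `X(osp_{1|2n})`
for the series `f(u) = Σ_s f_s u^{−s}` with `f_0 = 1`. -/
def IsMultAut (n : ℕ) (f : ℕ → ℂ) (φ : XX n →ₐ[ℂ] XX n) : Prop :=
  f 0 = 1 ∧ ∀ (i j : Fin (NN n)) (r : ℕ),
    φ (TT n i j r) = ∑ s ∈ Finset.range (r + 1), f s • TT n i j (r - s)

/-- The Yangian `Y(osp_{1|2n})`: the subalgebra of `X(osp_{1|2n})` of elements stable under
all the automorphisms `t_{ij}(u) ↦ f(u) t_{ij}(u)`. -/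
def Ysub (n : ℕ) : Subalgebra ℂ (XX n) where
  carrier := {z | ∀ (f : ℕ → ℂ) (φ : XX n →ₐ[ℂ] XX n), IsMultAut n f φ → φ z = z}
  mul_mem' := by
    intro a b ha hb f φ hφ
    rw [map_mul, ha f φ hφ, hb f φ hφ]
  one_mem' := by
    intro f φ hφ
    exact map_one φ
  add_mem' := by
    intro a b ha hb f φ hφ
    rw [map_add, ha f φ hφ, hb f φ hφ]
  zero_mem' := by
    intro f φ hφ
    exact map_zero φ
  algebraMap_mem' := by
    intro c f φ hφ
    exact φ.commutes c

/-- A finite-dimensional irreducible representation of the Yangian `Y(osp_{1|2n})`. -/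
structure FDRep (n : ℕ) where
  carrier : Type
  [ab : AddCommGroup carrier]
  [mc : Module ℂ carrier]
  [my : Module (Ysub n) carrier]
  [tw : IsScalarTower ℂ (Ysub n) carrier]
  fd : FiniteDimensional ℂ carrier
  simple : IsSimpleModule (Ysub n) carrier

attribute [instance] FDRep.ab FDRep.mc FDRep.my FDRep.tw

/-- Isomorphism of representations of `Y(osp_{1|2n})`. -/
def fdrepSetoid (n : ℕ) : Setoid (FDRep n) where
  r V W := Nonempty (V.carrier ≃ₗ[Ysub n] W.carrier)
  iseqv := ⟨fun _ => ⟨LinearEquiv.refl _ _⟩,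
    fun ⟨e⟩ => ⟨e.symm⟩, fun ⟨e⟩ ⟨f⟩ => ⟨e.trans f⟩⟩

end Yangian

end OspYangian
namespace OspYangian

open Finset

section VectorRep

variable (n : ℕ)

/-- The coefficient at `u^{−r}` of the image of `t_{ij}(u)` under the vector representation
`t_{ij}(u) ↦ δ_{ij} + u⁻¹ e_{ij} (−1)^{ī} − (u+κ)⁻¹ e_{j′i′} (−1)^{īj̄} τ_i τ_j`
of `X(osp_{1|2n})` on `ℂ^{1|2n}`, as a matrix. -/
def vecMat (i j : Fin (NN n)) (r : ℕ) : Matrix (Fin (NN n)) (Fin (NN n)) ℂ :=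
  if r = 0 then (if i = j then 1 else 0)
  else (if r = 1 then (sg (pb i)) • Matrix.single i j (1 : ℂ) else 0)
    - ((-(kappa n)) ^ (r - 1) * sg (pb i * pb j) * tau i * tau j) •
        Matrix.single (pr j) (pr i) (1 : ℂ)

/-- The entry at `(a,b)` of the matrix of `t_{ij}(u)` in the vector representation,
as a function of a complex number `u`. -/
def vrepE (u : ℂ) (i j a b : Fin (NN n)) : ℂ :=
  (if i = j ∧ a = b then 1 else 0)
  + u⁻¹ * sg (pb i) * (if a = i ∧ b = j then 1 else 0)
  - (u + kappa n)⁻¹ * sg (pb i * pb j) * tau i * tau j *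
      (if a = pr j ∧ b = pr i then 1 else 0)

/-- The entry at `(a,b)` of the coefficient at `u^{−s}` of the matrix of `t_{ij}(u−m)` in the
vector representation, using `(u−m)⁻¹ = Σ_{s≥1} m^{s−1} u^{−s}` and
`(u−m+κ)⁻¹ = Σ_{s≥1} (m−κ)^{s−1} u^{−s}`. -/
def vrepCE (m : ℂ) (s : ℕ) (i j a b : Fin (NN n)) : ℂ :=
  if s = 0 then (if i = j ∧ a = b then 1 else 0)
  else m ^ (s - 1) * sg (pb i) * (if a = i ∧ b = j then 1 else 0)
    - (m - kappa n) ^ (s - 1) * sg (pb i * pb j) * tau i * tau j *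
        (if a = pr j ∧ b = pr i then 1 else 0)

variable (k : ℕ)

/-- The `k`-fold tensor power `(ℂ^{1|2n})^{⊗k}`, realized as functions on multi-indices. -/
abbrev Wk := (Fin k → Fin (NN n)) → ℂ

/-- The Koszul sign arising when the elementary tensor operator
`t_{a_0 a_1} ⊗ t_{a_1 a_2} ⊗ ⋯ ⊗ t_{a_{k−1} a_k}` (each factor of parity
`p(a_{p−1}) + p(a_p)`) is applied to the basis vector `e_{d_1} ⊗ ⋯ ⊗ e_{d_k}`:
`(−1)^{Σ_p (p(a_{p−1})+p(a_p))·(p(d_1)+⋯+p(d_{p−1}))}`. -/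
def kosz (a : Fin (k + 1) → Fin (NN n)) (d : Fin k → Fin (NN n)) : ℂ :=
  sg (∑ p : Fin k, (pb (a p.castSucc) + pb (a p.succ)) *
    (∑ q : Fin k, if (q : ℕ) < (p : ℕ) then pb (d q) else 0))

/-- The matrix of the operator
`T_{ij}(u) = Σ_{a_1,…,a_{k−1}} t_{i a_1}(u) ⊗ t_{a_1 a_2}(u−1) ⊗ ⋯ ⊗ t_{a_{k−1} j}(u−k+1)`
on `(ℂ^{1|2n})^{⊗k}`, each tensor factor acting through the vector representation and the
tensor products taken with the super sign convention. -/
def TopMat (u : ℂ) (i j : Fin (NN n)) :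
    Matrix (Fin k → Fin (NN n)) (Fin k → Fin (NN n)) ℂ := fun c d =>
  ∑ a : Fin (k + 1) → Fin (NN n),
    if a 0 = i ∧ a (Fin.last k) = j then
      kosz n k a d *
        ∏ p : Fin k, vrepE n (u - ((p : ℕ) : ℂ)) (a p.castSucc) (a p.succ) (c p) (d p)
    else 0

/-- The matrix of the coefficient at `u^{−r}` of the operator `T_{ij}(u)` on
`(ℂ^{1|2n})^{⊗k}` (sum over compositions `r = r_1 + ⋯ + r_k` of products of coefficients of
the shifted vector representations). -/
def TopCMat (r : ℕ) (i j : Fin (NN n)) :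
    Matrix (Fin k → Fin (NN n)) (Fin k → Fin (NN n)) ℂ := fun c d =>
  ∑ a : Fin (k + 1) → Fin (NN n),
    if a 0 = i ∧ a (Fin.last k) = j then
      kosz n k a d *
        ∑ rr ∈ Finset.Nat.antidiagonalTuple k r,
          ∏ p : Fin k, vrepCE n ((p : ℕ) : ℂ) (rr p) (a p.castSucc) (a p.succ) (c p) (d p)
    else 0

/-- The antisymmetric vector `ξ_k = Σ_{σ ∈ S_k} sgn(σ) e_{σ(1)} ⊗ ⋯ ⊗ e_{σ(k)}`. -/
def xiVec (hk : k ≤ NN n) : Wk n k := fun c =>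
  ∑ σ : Equiv.Perm (Fin k),
    ((Equiv.Perm.sign σ : ℤ) : ℂ) * (if c = fun p => Fin.castLE hk (σ p) then 1 else 0)

end VectorRep

section SuperTranspose

variable (n : ℕ)

/-- The super-transposition `t : End ℂ^{1|2n} → End ℂ^{1|2n}`, the linear extension of
`e_{ij} ↦ e_{j′i′} (−1)^{īj̄+ī} τ_i τ_j`. -/
def stpM (A : Matrix (Fin (NN n)) (Fin (NN n)) ℂ) : Matrix (Fin (NN n)) (Fin (NN n)) ℂ :=
  ∑ i : Fin (NN n), ∑ j : Fin (NN n),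
    (A i j * sg (pb i * pb j + pb i) * tau i * tau j) •
      Matrix.single (pr j) (pr i) (1 : ℂ)

/-- `End(ℂ^{1|2n}) ⊗ End(ℂ^{1|2n})` realized as operators on `ℂ^{1|2n} ⊗ ℂ^{1|2n}`. -/
abbrev MatP := Matrix (Fin (NN n) × Fin (NN n)) (Fin (NN n) × Fin (NN n)) ℂ

/-- The elementary tensor `e_{ij} ⊗ e_{kl}` as an operator on `ℂ^{1|2n} ⊗ ℂ^{1|2n}`,
with the Koszul sign convention `(a ⊗ b)(v ⊗ w) = (−1)^{|b||v|} av ⊗ bw`. -/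
def elemT2 (i j k l : Fin (NN n)) : MatP n := fun x y =>
  if x = (i, k) ∧ y = (j, l) then sg ((pb k + pb l) * pb j) else 0

/-- The operator `P = Σ_{i,j} e_{ij} ⊗ e_{ji} (−1)^{j̄}`. -/
def Pmat : MatP n := ∑ i : Fin (NN n), ∑ j : Fin (NN n), sg (pb j) • elemT2 n i j j i

/-- The operator `Q = Σ_{i,j} e_{ij} ⊗ e_{i′j′} (−1)^{īj̄} τ_i τ_j`. -/
def Qmat : MatP n := ∑ i : Fin (NN n), ∑ j : Fin (NN n),
  (sg (pb i * pb j) * tau i * tau j) • elemT2 n i j (pr i) (pr j)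

/-- The super-transposition applied to the first tensor factor of
`End(ℂ^{1|2n}) ⊗ End(ℂ^{1|2n})`: extract the coefficients of `M` on elementary tensors
`e_{ij} ⊗ e_{kl}` and apply `t(e_{ij}) = e_{j′i′}(−1)^{īj̄+ī}τ_iτ_j`. -/
def stp1 (M : MatP n) : MatP n :=
  ∑ i : Fin (NN n), ∑ j : Fin (NN n), ∑ k : Fin (NN n), ∑ l : Fin (NN n),
    (M (i, k) (j, l) * sg ((pb k + pb l) * pb j) * sg (pb i * pb j + pb i) * tau i * tau j) •
      elemT2 n (pr j) (pr i) k l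

/-- The super-transposition applied to the second tensor factor. -/
def stp2 (M : MatP n) : MatP n :=
  ∑ i : Fin (NN n), ∑ j : Fin (NN n), ∑ k : Fin (NN n), ∑ l : Fin (NN n),
    (M (i, k) (j, l) * sg ((pb k + pb l) * pb j) * sg (pb k * pb l + pb k) * tau k * tau l) •
      elemT2 n i j (pr l) (pr k)

/-- `End(ℂ^{1|2n})^{⊗3}` realized as operators on `(ℂ^{1|2n})^{⊗3}`. -/
abbrev Mat3 := Matrix (Fin (NN n) × Fin (NN n) × Fin (NN n))
  (Fin (NN n) × Fin (NN n) × Fin (NN n)) ℂ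

/-- The elementary tensor `e_{ij} ⊗ e_{kl} ⊗ e_{mp}` as an operator on `(ℂ^{1|2n})^{⊗3}`
with the Koszul sign convention. -/
def elemT3 (i j k l m p : Fin (NN n)) : Mat3 n := fun x y =>
  if x = (i, k, m) ∧ y = (j, l, p) then
    sg ((pb k + pb l) * pb j + (pb m + pb p) * (pb j + pb l))
  else 0

/-- `P` placed in the tensor factors 1 and 2 of `End(ℂ^{1|2n})^{⊗3}`. -/
def P12 : Mat3 n := ∑ i : Fin (NN n), ∑ j : Fin (NN n), ∑ m : Fin (NN n),
  sg (pb j) • elemT3 n i j j i m m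

/-- `P` placed in the tensor factors 1 and 3. -/
def P13 : Mat3 n := ∑ i : Fin (NN n), ∑ j : Fin (NN n), ∑ m : Fin (NN n),
  sg (pb j) • elemT3 n i j m m j i

/-- `P` placed in the tensor factors 2 and 3. -/
def P23 : Mat3 n := ∑ i : Fin (NN n), ∑ j : Fin (NN n), ∑ m : Fin (NN n),
  sg (pb j) • elemT3 n m m i j j i

/-- `Q` placed in the tensor factors 1 and 2. -/
def Q12 : Mat3 n := ∑ i : Fin (NN n), ∑ j : Fin (NN n), ∑ m : Fin (NN n),
  (sg (pb i * pb j) * tau i * tau j) • elemT3 n i j (pr i) (pr j) m m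

/-- `Q` placed in the tensor factors 1 and 3. -/
def Q13 : Mat3 n := ∑ i : Fin (NN n), ∑ j : Fin (NN n), ∑ m : Fin (NN n),
  (sg (pb i * pb j) * tau i * tau j) • elemT3 n i j m m (pr i) (pr j)

/-- `Q` placed in the tensor factors 2 and 3. -/
def Q23 : Mat3 n := ∑ i : Fin (NN n), ∑ j : Fin (NN n), ∑ m : Fin (NN n),
  (sg (pb i * pb j) * tau i * tau j) • elemT3 n m m i j (pr i) (pr j)

/-- The `R`-matrix `R(w) = 1 − P/w + Q/(w−κ)` with `P`, `Q` placed in a given pair of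
tensor factors. -/
def Rmat3 (Pm Qm : Mat3 n) (w : ℂ) : Mat3 n :=
  1 - w⁻¹ • Pm + (w - kappa n)⁻¹ • Qm

end SuperTranspose

section glYangian

/-- The free algebra on the generators `t°_{ij}^{(r)}`, `r ≥ 1`, of the Yangian `Y(gl_N)`. -/
abbrev FGl (N : ℕ) := FreeAlgebra ℂ (Fin N × Fin N × ℕ)

/-- The coefficients of the generating series `t°_{ij}(u)` of `Y(gl_N)` in the free algebra. -/
def glgen (N : ℕ) : Fin N → Fin N → ℕ → FGl N := fun i j r =>
  if r = 0 then (if i = j then 1 else 0) else FreeAlgebra.ι ℂ (i, j, r - 1)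

/-- Left-hand side of the defining relation of `Y(gl_N)`:
`(u−v)[t°_{ij}(u), t°_{kl}(v)]` multiplied by `xy` (`x = u⁻¹`, `y = v⁻¹`). -/
def relLgl (N : ℕ) (t : Fin N → Fin N → ℕ → FGl N) (i j k l : Fin N) :
    PowerSeries (PowerSeries (FGl N)) :=
  (Yv (FGl N) - Xv (FGl N)) * (Tx t i j * Ty t k l - Ty t k l * Tx t i j)

/-- Right-hand side of the defining relation of `Y(gl_N)`:
`t°_{kj}(u)t°_{il}(v) − t°_{kj}(v)t°_{il}(u)` multiplied by `xy`. -/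
def relRgl (N : ℕ) (t : Fin N → Fin N → ℕ → FGl N) (i j k l : Fin N) :
    PowerSeries (PowerSeries (FGl N)) :=
  (Xv (FGl N) * Yv (FGl N)) * (Tx t k j * Ty t i l - Ty t k j * Tx t i l)

/-- The defining relations of `Y(gl_N)`. -/
def glrel (N : ℕ) : FGl N → FGl N → Prop := fun a b =>
  ∃ (i j k l : Fin N) (r s : ℕ),
    a = PowerSeries.coeff s
          (PowerSeries.coeff r (relLgl N (glgen N) i j k l)) ∧
    b = PowerSeries.coeff s
          (PowerSeries.coeff r (relRgl N (glgen N) i j k l))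

/-- The Yangian `Y(gl_N)`. -/
abbrev Ygl (N : ℕ) := RingQuot (glrel N)

/-- The generator `t°_{ij}^{(r)}` of `Y(gl_N)` (`TG N i j 0 = δ_{ij}`). -/
def TG (N : ℕ) (i j : Fin N) (r : ℕ) : Ygl N :=
  RingQuot.mkAlgHom ℂ (glrel N) (glgen N i j r)

/-- The embedding of index sets `{1,…,n} ↪ {1,…,2n+1}` used for `Y(gl_n) ↪ X(osp_{1|2n})`. -/
def embgl {n : ℕ} (i : Fin n) : Fin (NN n) :=
  idx (i : ℕ) (by have h : (i : ℕ) < n := i.isLt; omega)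

end glYangian

/-- `k ≤ n` implies `k ≤ 2n+1`. -/
theorem le_NN {k n : ℕ} (h : k ≤ n) : k ≤ NN n := by
  have h2 : k ≤ 2 * n + 1 := by omega
  exact h2



end OspYangian

set_option linter.unusedSectionVars false

namespace OspYangian

open Finset

section CoeffKit

variable {A : Type*} [Ring A] [Algebra ℂ A]

private lemma commute_Xv (f : PowerSeries (PowerSeries A)) : Xv A * f = f * Xv A := by
  apply PowerSeries.ext
  intro r
  show (PowerSeries.coeff r) (PowerSeries.C PowerSeries.X * f)
    = (PowerSeries.coeff r) (f * PowerSeries.C PowerSeries.X)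
  rw [PowerSeries.coeff_C_mul r f (PowerSeries.X : PowerSeries A),
    PowerSeries.coeff_mul_C r f (PowerSeries.X : PowerSeries A)]
  exact ((PowerSeries.commute_X _).symm.eq)

private lemma coeff_Xv_mul (f : PowerSeries (PowerSeries A)) (r : ℕ) :
    (PowerSeries.coeff r) (Xv A * f)
      = PowerSeries.X * (PowerSeries.coeff r f) := by
  simp only [Xv, PowerSeries.coeff_C_mul]

private lemma coeff_Yv_mul (f : PowerSeries (PowerSeries A)) (r : ℕ) :
    (PowerSeries.coeff r) (Yv A * f)
      = if 1 ≤ r then (PowerSeries.coeff (r - 1)) f else 0 := by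
  simp only [Yv]
  rw [← pow_one (PowerSeries.X : PowerSeries (PowerSeries A)),
    PowerSeries.coeff_X_pow_mul']

private lemma coeff_Xi_mul (ψ : PowerSeries A) (c : ℕ) :
    (PowerSeries.coeff c) (PowerSeries.X * ψ)
      = if 1 ≤ c then (PowerSeries.coeff (c - 1)) ψ else 0 := by
  rw [← pow_one (PowerSeries.X : PowerSeries A), PowerSeries.coeff_X_pow_mul']

private lemma coeff_Tx_Ty {I : Type*} (t : I → I → ℕ → A) (i j k l : I) (r c : ℕ) :
    (PowerSeries.coeff c) ((PowerSeries.coeff r) (Tx t i j * Ty t k l))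
      = t i j c * t k l r := by
  simp only [Tx, Ty, PowerSeries.coeff_C_mul, PowerSeries.coeff_mk, PowerSeries.coeff_mul_C]

private lemma coeff_Ty_Tx {I : Type*} (t : I → I → ℕ → A) (i j k l : I) (r c : ℕ) :
    (PowerSeries.coeff c) ((PowerSeries.coeff r) (Ty t k l * Tx t i j))
      = t k l r * t i j c := by
  simp only [Ty, Tx, PowerSeries.coeff_mul_C, PowerSeries.coeff_mk, PowerSeries.coeff_C_mul]

private lemma coeff_Tx_Ty_a {I : Type*} (t : I → I → ℕ → A) (i j k l : I) (c : ℕ) :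
    (PowerSeries.coeff c) ((PowerSeries.constantCoeff) (Tx t i j * Ty t k l))
      = t i j c * t k l 0 := by
  rw [← PowerSeries.coeff_zero_eq_constantCoeff_apply]; exact coeff_Tx_Ty t i j k l 0 c

private lemma coeff_Tx_Ty_b {I : Type*} (t : I → I → ℕ → A) (i j k l : I) (r : ℕ) :
    (PowerSeries.constantCoeff) ((PowerSeries.coeff r) (Tx t i j * Ty t k l))
      = t i j 0 * t k l r := by
  rw [← PowerSeries.coeff_zero_eq_constantCoeff_apply]; exact coeff_Tx_Ty t i j k l r 0

private lemma coeff_Tx_Ty_c {I : Type*} (t : I → I → ℕ → A) (i j k l : I) :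
    (PowerSeries.constantCoeff) ((PowerSeries.constantCoeff)
      (Tx t i j * Ty t k l)) = t i j 0 * t k l 0 := by
  rw [← PowerSeries.coeff_zero_eq_constantCoeff_apply,
    ← PowerSeries.coeff_zero_eq_constantCoeff_apply]
  exact coeff_Tx_Ty t i j k l 0 0

private lemma coeff_Ty_Tx_a {I : Type*} (t : I → I → ℕ → A) (i j k l : I) (c : ℕ) :
    (PowerSeries.coeff c) ((PowerSeries.constantCoeff) (Ty t k l * Tx t i j))
      = t k l 0 * t i j c := by
  rw [← PowerSeries.coeff_zero_eq_constantCoeff_apply]; exact coeff_Ty_Tx t i j k l 0 c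

private lemma coeff_Ty_Tx_b {I : Type*} (t : I → I → ℕ → A) (i j k l : I) (r : ℕ) :
    (PowerSeries.constantCoeff) ((PowerSeries.coeff r) (Ty t k l * Tx t i j))
      = t k l r * t i j 0 := by
  rw [← PowerSeries.coeff_zero_eq_constantCoeff_apply]; exact coeff_Ty_Tx t i j k l r 0

private lemma coeff_Ty_Tx_c {I : Type*} (t : I → I → ℕ → A) (i j k l : I) :
    (PowerSeries.constantCoeff) ((PowerSeries.constantCoeff)
      (Ty t k l * Tx t i j)) = t k l 0 * t i j 0 := by
  rw [← PowerSeries.coeff_zero_eq_constantCoeff_apply,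
    ← PowerSeries.coeff_zero_eq_constantCoeff_apply]
  exact coeff_Ty_Tx t i j k l 0 0

private lemma cc_Tx {I : Type*} (t : I → I → ℕ → A) (i j : I) :
    (PowerSeries.constantCoeff) (Tx t i j) = PowerSeries.mk (t i j) := by
  simp [Tx]

private lemma cc_Ty {I : Type*} (t : I → I → ℕ → A) (k l : I) :
    (PowerSeries.constantCoeff) (Ty t k l) = PowerSeries.C (t k l 0) := by
  simp [Ty]

private lemma prefac1 (κ : ℂ) (S : PowerSeries (PowerSeries A)) :
    (Yv A - Xv A) * (Yv A - Xv A - κ • (Xv A * Yv A)) * S =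
      Xv A * (Xv A * S) - (2:ℂ) • (Xv A * (Yv A * S)) + κ • (Xv A * (Xv A * (Yv A * S)))
        + Yv A * (Yv A * S) - κ • (Xv A * (Yv A * (Yv A * S))) := by
  have hc : ∀ W : PowerSeries (PowerSeries A), Yv A * (Xv A * W) = Xv A * (Yv A * W) := by
    intro W; rw [← mul_assoc, ← commute_Xv (Yv A), mul_assoc]
  simp only [mul_sub, sub_mul, mul_smul_comm, smul_mul_assoc, mul_assoc]
  rw [hc S, hc (Yv A * S), two_smul]
  module

private lemma prefac2 (κ : ℂ) (Aex Bex : PowerSeries (PowerSeries A)) :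
    Xv A * Yv A * (Yv A - Xv A - κ • (Xv A * Yv A)) * Aex
      - Xv A * Yv A * (Yv A - Xv A) * Bex =
      Xv A * (Yv A * (Yv A * Aex)) - Xv A * (Xv A * (Yv A * Aex))
        - κ • (Xv A * (Xv A * (Yv A * (Yv A * Aex))))
        - Xv A * (Yv A * (Yv A * Bex)) + Xv A * (Xv A * (Yv A * Bex)) := by
  have hc : ∀ W : PowerSeries (PowerSeries A), Yv A * (Xv A * W) = Xv A * (Yv A * W) := by
    intro W; rw [← mul_assoc, ← commute_Xv (Yv A), mul_assoc]
  simp only [mul_sub, sub_mul, mul_smul_comm, smul_mul_assoc, mul_assoc]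
  rw [hc Aex, hc (Yv A * Aex), hc Bex]
  module

end CoeffKit

section CoeffFormulas

variable {A : Type*} [Ring A] [Algebra ℂ A] {n : ℕ}

/-- The coefficient of the supercommutator series. -/
def Scf (t : Fin (NN n) → Fin (NN n) → ℕ → A) (i j k l : Fin (NN n)) (c r : ℕ) : A :=
  t i j c * t k l r - sg ((pb i + pb j) * (pb k + pb l)) • (t k l r * t i j c)

/-- The coefficient of the `A`-part of `relR`. -/
def Acf (t : Fin (NN n) → Fin (NN n) → ℕ → A) (i j k l : Fin (NN n)) (c r : ℕ) : A :=
  sg (pb i * pb j + pb i * pb k + pb j * pb k) • (t k j c * t i l r - t k j r * t i l c)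

/-- The coefficient of the `B`-part of `relR`. -/
def Bcf (t : Fin (NN n) → Fin (NN n) → ℕ → A) (i j k l : Fin (NN n)) (c r : ℕ) : A :=
  (if k = pr i then
      ∑ p : Fin (NN n), (sg (pb i + pb i * pb j + pb j * pb p) * tau i * tau p) •
        (t p j c * t (pr p) l r)
    else 0)
  - (if l = pr j then
      ∑ p : Fin (NN n), (sg (pb j + pb p + pb i * pb k + pb j * pb k + pb i * pb p)
          * tau j * tau p) • (t k (pr p) r * t i p c)
    else 0)

variable (t : Fin (NN n) → Fin (NN n) → ℕ → A) (i j k l : Fin (NN n))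

private lemma coeff_Sser (r c : ℕ) :
    (PowerSeries.coeff c) ((PowerSeries.coeff r)
      (Tx t i j * Ty t k l - sg ((pb i + pb j) * (pb k + pb l)) • (Ty t k l * Tx t i j)))
      = Scf t i j k l c r := by
  simp [Scf, coeff_Tx_Ty, coeff_Ty_Tx, PowerSeries.coeff_smul, map_sub]

private lemma coeff_Aser (r c : ℕ) :
    (PowerSeries.coeff c) ((PowerSeries.coeff r)
      (sg (pb i * pb j + pb i * pb k + pb j * pb k) •
        (Tx t k j * Ty t i l - Ty t k j * Tx t i l)))
      = Acf t i j k l c r := by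
  simp [Acf, coeff_Tx_Ty, coeff_Ty_Tx, PowerSeries.coeff_smul, map_sub]

private lemma coeff_Bser (r c : ℕ) :
    (PowerSeries.coeff c) ((PowerSeries.coeff r)
      ((if k = pr i then
          ∑ p : Fin (NN n), (sg (pb i + pb i * pb j + pb j * pb p) * tau i * tau p) •
            (Tx t p j * Ty t (pr p) l)
        else 0)
       - (if l = pr j then
          ∑ p : Fin (NN n), (sg (pb j + pb p + pb i * pb k + pb j * pb k + pb i * pb p)
              * tau j * tau p) • (Ty t k (pr p) * Tx t i p)
        else 0)))
      = Bcf t i j k l c r := by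
  simp [Bcf, coeff_Tx_Ty, coeff_Ty_Tx, PowerSeries.coeff_smul, map_sub, map_sum,
    apply_ite (PowerSeries.coeff c), apply_ite (PowerSeries.coeff r)]

private lemma L_main (a r : ℕ) :
    (PowerSeries.coeff (a+2)) ((PowerSeries.coeff (r+2))
        (relL n t i j k l)) =
      Scf t i j k l a (r+2) - (2:ℂ) • Scf t i j k l (a+1) (r+1)
        + kappa n • Scf t i j k l a (r+1)
        + Scf t i j k l (a+2) r - kappa n • Scf t i j k l (a+1) r := by
  rw [relL, prefac1]
  simp only [Scf, map_sub, map_add, PowerSeries.coeff_smul, coeff_Xv_mul, coeff_Yv_mul,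
    coeff_Xi_mul, coeff_Tx_Ty, coeff_Ty_Tx]
  norm_num [coeff_Tx_Ty, coeff_Ty_Tx, coeff_Tx_Ty_a, coeff_Tx_Ty_b, coeff_Tx_Ty_c, coeff_Ty_Tx_a, coeff_Ty_Tx_b, coeff_Ty_Tx_c, cc_Tx, cc_Ty, PowerSeries.coeff_mul_C, PowerSeries.coeff_C_mul, PowerSeries.coeff_mk, PowerSeries.constantCoeff_C, PowerSeries.constantCoeff_mk]
  try module

private lemma L_r1 (a : ℕ) :
    (PowerSeries.coeff (a+2)) ((PowerSeries.coeff 1)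
        (relL n t i j k l)) =
      Scf t i j k l a 1 - (2:ℂ) • Scf t i j k l (a+1) 0 + kappa n • Scf t i j k l a 0 := by
  rw [relL, prefac1]
  simp only [Scf, map_sub, map_add, PowerSeries.coeff_smul, coeff_Xv_mul, coeff_Yv_mul,
    coeff_Xi_mul, coeff_Tx_Ty, coeff_Ty_Tx]
  norm_num [coeff_Tx_Ty, coeff_Ty_Tx, coeff_Tx_Ty_a, coeff_Tx_Ty_b, coeff_Tx_Ty_c, coeff_Ty_Tx_a, coeff_Ty_Tx_b, coeff_Ty_Tx_c, cc_Tx, cc_Ty, PowerSeries.coeff_mul_C, PowerSeries.coeff_C_mul, PowerSeries.coeff_mk, PowerSeries.constantCoeff_C, PowerSeries.constantCoeff_mk]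
  try module

private lemma L_c1 (s : ℕ) :
    (PowerSeries.coeff 1) ((PowerSeries.coeff (s+2))
        (relL n t i j k l)) =
      -((2:ℂ) • Scf t i j k l 0 (s+1)) + Scf t i j k l 1 s - kappa n • Scf t i j k l 0 s := by
  rw [relL, prefac1]
  simp only [Scf, map_sub, map_add, PowerSeries.coeff_smul, coeff_Xv_mul, coeff_Yv_mul,
    coeff_Xi_mul, coeff_Tx_Ty, coeff_Ty_Tx]
  norm_num [coeff_Tx_Ty, coeff_Ty_Tx, coeff_Tx_Ty_a, coeff_Tx_Ty_b, coeff_Tx_Ty_c, coeff_Ty_Tx_a, coeff_Ty_Tx_b, coeff_Ty_Tx_c, cc_Tx, cc_Ty, PowerSeries.coeff_mul_C, PowerSeries.coeff_C_mul, PowerSeries.coeff_mk, PowerSeries.constantCoeff_C, PowerSeries.constantCoeff_mk]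
  try module

private lemma R_main (a r : ℕ) :
    (PowerSeries.coeff (a+2)) ((PowerSeries.coeff (r+2))
        (relR n t i j k l)) =
      - Acf t i j k l a (r+1) + Acf t i j k l (a+1) r - kappa n • Acf t i j k l a r
        + Bcf t i j k l a (r+1) - Bcf t i j k l (a+1) r := by
  rw [relR, prefac2]
  simp only [Acf, Bcf]
  split_ifs <;>
  · simp only [map_sub, map_add, map_sum, PowerSeries.coeff_smul, coeff_Xv_mul, coeff_Yv_mul,
      coeff_Xi_mul, coeff_Tx_Ty, coeff_Ty_Tx, map_zero, smul_zero]
    norm_num [coeff_Tx_Ty, coeff_Ty_Tx, coeff_Tx_Ty_a, coeff_Tx_Ty_b, coeff_Tx_Ty_c, coeff_Ty_Tx_a, coeff_Ty_Tx_b, coeff_Ty_Tx_c, cc_Tx, cc_Ty, PowerSeries.coeff_mul_C, PowerSeries.coeff_C_mul, PowerSeries.coeff_mk, PowerSeries.constantCoeff_C, PowerSeries.constantCoeff_mk]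
    try module

private lemma R_r1 (a : ℕ) :
    (PowerSeries.coeff (a+2)) ((PowerSeries.coeff 1)
        (relR n t i j k l)) =
      - Acf t i j k l a 0 + Bcf t i j k l a 0 := by
  rw [relR, prefac2]
  simp only [Acf, Bcf]
  split_ifs <;>
  · simp only [map_sub, map_add, map_sum, PowerSeries.coeff_smul, coeff_Xv_mul, coeff_Yv_mul,
      coeff_Xi_mul, coeff_Tx_Ty, coeff_Ty_Tx, map_zero, smul_zero]
    norm_num [coeff_Tx_Ty, coeff_Ty_Tx, coeff_Tx_Ty_a, coeff_Tx_Ty_b, coeff_Tx_Ty_c, coeff_Ty_Tx_a, coeff_Ty_Tx_b, coeff_Ty_Tx_c, cc_Tx, cc_Ty, PowerSeries.coeff_mul_C, PowerSeries.coeff_C_mul, PowerSeries.coeff_mk, PowerSeries.constantCoeff_C, PowerSeries.constantCoeff_mk]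
    try module

private lemma R_c1 (s : ℕ) :
    (PowerSeries.coeff 1) ((PowerSeries.coeff (s+2))
        (relR n t i j k l)) =
      Acf t i j k l 0 s - Bcf t i j k l 0 s := by
  rw [relR, prefac2]
  simp only [Acf, Bcf]
  split_ifs <;>
  · simp only [map_sub, map_add, map_sum, PowerSeries.coeff_smul, coeff_Xv_mul, coeff_Yv_mul,
      coeff_Xi_mul, coeff_Tx_Ty, coeff_Ty_Tx, map_zero, smul_zero]
    norm_num [coeff_Tx_Ty, coeff_Ty_Tx, coeff_Tx_Ty_a, coeff_Tx_Ty_b, coeff_Tx_Ty_c, coeff_Ty_Tx_a, coeff_Ty_Tx_b, coeff_Ty_Tx_c, cc_Tx, cc_Ty, PowerSeries.coeff_mul_C, PowerSeries.coeff_C_mul, PowerSeries.coeff_mk, PowerSeries.constantCoeff_C, PowerSeries.constantCoeff_mk]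
    try module

end CoeffFormulas

end OspYangian

namespace OspYangian

open Finset

section XXLevel

variable {n : ℕ}

private lemma relationXX (i j k l : Fin (NN n)) (r s : ℕ) :
    RingQuot.mkAlgHom ℂ (yrel n) (PowerSeries.coeff s
        (PowerSeries.coeff r (relL n (fgen n) i j k l)))
      = RingQuot.mkAlgHom ℂ (yrel n) (PowerSeries.coeff s
        (PowerSeries.coeff r (relR n (fgen n) i j k l))) :=
  RingQuot.mkAlgHom_rel ℂ ⟨i, j, k, l, r, s, rfl, rfl⟩

/-- The supercommutator of generator coefficients in the extended Yangian. -/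
def TCom (n : ℕ) (i j k l : Fin (NN n)) (a r : ℕ) : XX n :=
  TT n i j a * TT n k l r - sg ((pb i + pb j) * (pb k + pb l)) • (TT n k l r * TT n i j a)

private lemma mkTT (i j : Fin (NN n)) (r : ℕ) :
    RingQuot.mkAlgHom ℂ (yrel n) (fgen n i j r) = TT n i j r := rfl

private lemma mk_Scf (i j k l : Fin (NN n)) (c r : ℕ) :
    RingQuot.mkAlgHom ℂ (yrel n) (Scf (fgen n) i j k l c r) = TCom n i j k l c r := by
  simp only [Scf, TCom, map_sub, map_smul, map_mul, mkTT]

private lemma sg_even (m p : ℕ) : sg ((m + m) * p) = 1 := by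
  unfold sg
  rw [show (m + m) * p = 2 * (m * p) by ring, pow_mul]
  norm_num

private lemma sg_even' (m p : ℕ) : sg (m * (p + p)) = 1 := by
  unfold sg
  rw [show m * (p + p) = 2 * (m * p) by ring, pow_mul]
  norm_num

private lemma TT0 (i j : Fin (NN n)) :
    TT n i j 0 = algebraMap ℂ (XX n) (if i = j then 1 else 0) := by
  rcases eq_or_ne i j with h | h <;>
    simp [TT, fgen, h]

private lemma TCom_right_zero (i j k l : Fin (NN n)) (a : ℕ) : TCom n i j k l a 0 = 0 := by
  rcases eq_or_ne k l with h | h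
  · subst h
    rw [TCom, TT0, if_pos rfl, map_one, one_mul, mul_one, sg_even', one_smul, sub_self]
  · rw [TCom, TT0, if_neg h, map_zero, zero_mul, mul_zero, smul_zero, sub_self]

private lemma TCom_left_zero_diag (i k l : Fin (NN n)) (r : ℕ) : TCom n i i k l 0 r = 0 := by
  rw [TCom, TT0, if_pos rfl, map_one, one_mul, mul_one, sg_even, one_smul, sub_self]

/-- Quadratic expressions of bounded degree. -/
def DDset (n m : ℕ) : Set (XX n) :=
  {x | (∃ a b c d p q, 1 ≤ p ∧ 1 ≤ q ∧ p + q ≤ m ∧ x = TT n a b p * TT n c d q)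
    ∨ (∃ a b p, 1 ≤ p ∧ p ≤ m ∧ x = TT n a b p) ∨ x = 1}

/-- The span of quadratic expressions of bounded degree. -/
def DD (n m : ℕ) : Submodule ℂ (XX n) := Submodule.span ℂ (DDset n m)

private lemma DD_mono {m m' : ℕ} (h : m ≤ m') : DD n m ≤ DD n m' := by
  apply Submodule.span_mono
  rintro x (⟨a,b,c,d,p,q,hp,hq,hm,rfl⟩ | ⟨a,b,p,hp,hm,rfl⟩ | rfl)
  · exact Or.inl ⟨a,b,c,d,p,q,hp,hq,le_trans hm h,rfl⟩
  · exact Or.inr (Or.inl ⟨a,b,p,hp,le_trans hm h,rfl⟩)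
  · exact Or.inr (Or.inr rfl)

private lemma one_mem_DD (m : ℕ) : (1 : XX n) ∈ DD n m :=
  Submodule.subset_span (Or.inr (Or.inr rfl))

private lemma TT_mem_DD {p m : ℕ} (hp : 1 ≤ p) (hm : p ≤ m) (a b : Fin (NN n)) :
    TT n a b p ∈ DD n m :=
  Submodule.subset_span (Or.inr (Or.inl ⟨a,b,p,hp,hm,rfl⟩))

private lemma TTmul_mem (a b c d : Fin (NN n)) (p q m : ℕ) (hm : p + q ≤ m) :
    TT n a b p * TT n c d q ∈ DD n m := by
  rcases Nat.eq_zero_or_pos p with hp | hp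
  · subst hp
    rw [TT0]
    rcases Nat.eq_zero_or_pos q with hq | hq
    · subst hq
      rw [TT0, ← map_mul, Algebra.algebraMap_eq_smul_one]
      exact Submodule.smul_mem _ _ (one_mem_DD m)
    · rw [← Algebra.smul_def]
      exact Submodule.smul_mem _ _ (TT_mem_DD hq (by omega) c d)
  · rcases Nat.eq_zero_or_pos q with hq | hq
    · subst hq
      rw [TT0, ← Algebra.commutes, ← Algebra.smul_def]
      exact Submodule.smul_mem _ _ (TT_mem_DD hp (by omega) a b)
    · exact Submodule.subset_span (Or.inl ⟨a,b,c,d,p,q,hp,hq,hm,rfl⟩)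

private lemma mkA_mem (i j k l : Fin (NN n)) (c r m : ℕ) (hm : c + r ≤ m) :
    RingQuot.mkAlgHom ℂ (yrel n) (Acf (fgen n) i j k l c r) ∈ DD n m := by
  simp only [Acf, map_smul, map_sub, map_mul, mkTT]
  exact Submodule.smul_mem _ _ (Submodule.sub_mem _
    (TTmul_mem _ _ _ _ _ _ _ hm) (TTmul_mem _ _ _ _ _ _ _ (by omega)))

private lemma mkB_mem (i j k l : Fin (NN n)) (c r m : ℕ) (hm : c + r ≤ m) :
    RingQuot.mkAlgHom ℂ (yrel n) (Bcf (fgen n) i j k l c r) ∈ DD n m := by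
  rw [Bcf, map_sub]
  apply Submodule.sub_mem
  · rw [apply_ite (RingQuot.mkAlgHom ℂ (yrel n)), map_zero]
    split_ifs
    · rw [map_sum]
      apply Submodule.sum_mem
      intro p _
      rw [map_smul, map_mul, mkTT, mkTT]
      exact Submodule.smul_mem _ _ (TTmul_mem _ _ _ _ _ _ _ hm)
    · exact Submodule.zero_mem _
  · rw [apply_ite (RingQuot.mkAlgHom ℂ (yrel n)), map_zero]
    split_ifs
    · rw [map_sum]
      apply Submodule.sum_mem
      intro p _
      rw [map_smul, map_mul, mkTT, mkTT]
      exact Submodule.smul_mem _ _ (TTmul_mem _ _ _ _ _ _ _ (by omega))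
    · exact Submodule.zero_mem _

private lemma XXE_main (i j k l : Fin (NN n)) (a r : ℕ) :
    TCom n i j k l a (r+2) - (2:ℂ) • TCom n i j k l (a+1) (r+1)
        + kappa n • TCom n i j k l a (r+1)
        + TCom n i j k l (a+2) r - kappa n • TCom n i j k l (a+1) r
      = - RingQuot.mkAlgHom ℂ (yrel n) (Acf (fgen n) i j k l a (r+1))
        + RingQuot.mkAlgHom ℂ (yrel n) (Acf (fgen n) i j k l (a+1) r)
        - kappa n • RingQuot.mkAlgHom ℂ (yrel n) (Acf (fgen n) i j k l a r)
        + RingQuot.mkAlgHom ℂ (yrel n) (Bcf (fgen n) i j k l a (r+1))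
        - RingQuot.mkAlgHom ℂ (yrel n) (Bcf (fgen n) i j k l (a+1) r) := by
  have h := relationXX i j k l (r+2) (a+2)
  rw [L_main, R_main] at h
  simpa only [map_sub, map_add, map_neg, map_smul, mk_Scf] using h

private lemma XXE_r1 (i j k l : Fin (NN n)) (a : ℕ) :
    TCom n i j k l a 1 - (2:ℂ) • TCom n i j k l (a+1) 0 + kappa n • TCom n i j k l a 0
      = - RingQuot.mkAlgHom ℂ (yrel n) (Acf (fgen n) i j k l a 0)
        + RingQuot.mkAlgHom ℂ (yrel n) (Bcf (fgen n) i j k l a 0) := by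
  have h := relationXX i j k l 1 (a+2)
  rw [L_r1, R_r1] at h
  simpa only [map_sub, map_add, map_neg, map_smul, mk_Scf] using h

private lemma XXE_c1 (i j k l : Fin (NN n)) (s : ℕ) :
    -((2:ℂ) • TCom n i j k l 0 (s+1)) + TCom n i j k l 1 s - kappa n • TCom n i j k l 0 s
      = RingQuot.mkAlgHom ℂ (yrel n) (Acf (fgen n) i j k l 0 s)
        - RingQuot.mkAlgHom ℂ (yrel n) (Bcf (fgen n) i j k l 0 s) := by
  have h := relationXX i j k l (s+2) 1
  rw [L_c1, R_c1] at h
  simpa only [map_sub, map_add, map_neg, map_smul, mk_Scf] using h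

theorem TCom_mem (i j k l : Fin (NN n)) : ∀ r a : ℕ, TCom n i j k l a r ∈ DD n (a + r - 1) := by
  intro r
  induction r using Nat.strong_induction_on with
  | _ r IH =>
    match r with
    | 0 =>
      intro a
      rw [TCom_right_zero]
      exact Submodule.zero_mem _
    | 1 =>
      intro a
      have h := XXE_r1 (n := n) i j k l a
      rw [TCom_right_zero, TCom_right_zero, smul_zero, smul_zero, sub_zero, add_zero] at h
      have hidx : a + 1 - 1 = a := by omega
      rw [h, hidx]
      exact Submodule.add_mem _ (Submodule.neg_mem _ (mkA_mem i j k l a 0 a (by omega)))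
        (mkB_mem i j k l a 0 a (by omega))
    | (r+2) =>
      intro a
      have h := XXE_main (n := n) i j k l a r
      have h2 : TCom n i j k l a (r+2) =
          (TCom n i j k l a (r+2) - (2:ℂ) • TCom n i j k l (a+1) (r+1)
            + kappa n • TCom n i j k l a (r+1)
            + TCom n i j k l (a+2) r - kappa n • TCom n i j k l (a+1) r)
          + (2:ℂ) • TCom n i j k l (a+1) (r+1) - kappa n • TCom n i j k l a (r+1)
          - TCom n i j k l (a+2) r + kappa n • TCom n i j k l (a+1) r := by
        module
      rw [h] at h2
      rw [h2]
      have hidx : a + (r+2) - 1 = a + r + 1 := by omega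
      rw [hidx]
      have m1 : TCom n i j k l (a+1) (r+1) ∈ DD n (a + r + 1) := by
        have := IH (r+1) (by omega) (a+1)
        simpa using DD_mono (by omega) this
      have m2 : TCom n i j k l a (r+1) ∈ DD n (a + r + 1) := by
        have := IH (r+1) (by omega) a
        exact DD_mono (by omega) this
      have m3 : TCom n i j k l (a+2) r ∈ DD n (a + r + 1) := by
        have := IH r (by omega) (a+2)
        exact DD_mono (by omega) this
      have m4 : TCom n i j k l (a+1) r ∈ DD n (a + r + 1) := by
        have := IH r (by omega) (a+1)
        exact DD_mono (by omega) this
      refine Submodule.add_mem _ (Submodule.sub_mem _ (Submodule.sub_mem _ (Submodule.add_mem _ ?_ ?_) ?_) ?_) ?_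
      · exact Submodule.sub_mem _
          (Submodule.add_mem _
            (Submodule.sub_mem _
              (Submodule.add_mem _
                (Submodule.neg_mem _ (mkA_mem i j k l a (r+1) (a+r+1) (by omega)))
                (mkA_mem i j k l (a+1) r (a+r+1) (by omega)))
              (Submodule.smul_mem _ _ (mkA_mem i j k l a r (a+r+1) (by omega))))
            (mkB_mem i j k l a (r+1) (a+r+1) (by omega)))
          (mkB_mem i j k l (a+1) r (a+r+1) (by omega))
      · exact Submodule.smul_mem _ _ m1
      · exact Submodule.smul_mem _ _ m2
      · exact m3
      · exact Submodule.smul_mem _ _ m4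

end XXLevel

end OspYangian

namespace OspYangian

open Finset

section CartanComm

variable {n : ℕ}

private lemma pr_pr (k : Fin (NN n)) : pr (pr k) = k := by
  have hk : (k : ℕ) < 2 * n + 1 := k.isLt
  unfold pr idx
  apply Fin.ext
  simp only []
  omega

private lemma pb_pr (k : Fin (NN n)) : pb (pr k) = pb k := by
  have hk : (k : ℕ) < 2 * n + 1 := k.isLt
  unfold pb pr idx
  simp only []
  split_ifs <;> first | rfl | omega

private lemma pr_eq_iff (k i : Fin (NN n)) : (k = pr i) ↔ (pr k = i) := by
  constructor
  · rintro rfl; exact pr_pr i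
  · rintro rfl; exact (pr_pr k).symm

private lemma sgA_diag (i k : Fin (NN n)) :
    sg (pb i * pb i + pb i * pb k + pb i * pb k) = sg (pb i) := by
  unfold sg pb
  split_ifs <;> norm_num

private lemma c_left (i : Fin (NN n)) :
    sg (pb i + pb i * pb i + pb i * pb i) * tau i * tau i = sg (pb i) := by
  unfold sg pb tau
  split_ifs <;> norm_num

private lemma c_right (i k : Fin (NN n)) :
    sg (pb i + pb i + pb i * pb k + pb i * pb k + pb i * pb i) * tau i * tau i = sg (pb i) := by
  unfold sg pb tau
  split_ifs <;> norm_num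

private lemma fgen_zero (i j : Fin (NN n)) : fgen n i j 0 = if i = j then 1 else 0 := by
  simp [fgen]

private lemma mkA_diag (i k l : Fin (NN n)) (s : ℕ) :
    RingQuot.mkAlgHom ℂ (yrel n) (Acf (fgen n) i i k l 0 s)
      = (if k = i then sg (pb i) • TT n i l s else 0)
        - (if i = l then sg (pb i) • TT n k i s else 0) := by
  rw [Acf, fgen_zero, fgen_zero, sgA_diag]
  simp only [ite_mul, mul_ite, one_mul, zero_mul, mul_one, mul_zero]
  simp only [map_smul, map_sub, apply_ite (RingQuot.mkAlgHom ℂ (yrel n)), map_zero, mkTT,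
    smul_sub, smul_ite, smul_zero]

private lemma mkB_diag (i k l : Fin (NN n)) (s : ℕ) :
    RingQuot.mkAlgHom ℂ (yrel n) (Bcf (fgen n) i i k l 0 s)
      = (if k = pr i then sg (pb i) • TT n (pr i) l s else 0)
        - (if l = pr i then sg (pb i) • TT n k (pr i) s else 0) := by
  rw [Bcf, map_sub]
  congr 1
  · rw [apply_ite (RingQuot.mkAlgHom ℂ (yrel n)), map_zero]
    congr 1
    rw [map_sum]
    have hcollapse : ∀ p : Fin (NN n), p ∈ univ →
        RingQuot.mkAlgHom ℂ (yrel n)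
          ((sg (pb i + pb i * pb i + pb i * pb p) * tau i * tau p) •
            (fgen n p i 0 * fgen n (pr p) l s))
        = if p = i then
            (sg (pb i + pb i * pb i + pb i * pb p) * tau i * tau p) • TT n (pr p) l s
          else 0 := by
      intro p _
      rw [fgen_zero]
      rcases eq_or_ne p i with h | h
      · simp [h, mkTT]
      · simp [h]
    rw [Finset.sum_congr rfl hcollapse, Finset.sum_ite_eq' univ i, if_pos (mem_univ i)]
    rw [show sg (pb i + pb i * pb i + pb i * pb i) * tau i * tau i = sg (pb i) from c_left i]
  · rw [apply_ite (RingQuot.mkAlgHom ℂ (yrel n)), map_zero]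
    congr 1
    rw [map_sum]
    have hcollapse : ∀ p : Fin (NN n), p ∈ univ →
        RingQuot.mkAlgHom ℂ (yrel n)
          ((sg (pb i + pb p + pb i * pb k + pb i * pb k + pb i * pb p) * tau i * tau p) •
            (fgen n k (pr p) s * fgen n i p 0))
        = if i = p then
            (sg (pb i + pb p + pb i * pb k + pb i * pb k + pb i * pb p) * tau i * tau p) •
              TT n k (pr p) s
          else 0 := by
      intro p _
      rw [fgen_zero]
      rcases eq_or_ne i p with h | h
      · simp [h, mkTT]
      · simp [h]
    rw [Finset.sum_congr rfl hcollapse, Finset.sum_ite_eq univ i, if_pos (mem_univ i)]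
    rw [show sg (pb i + pb i + pb i * pb k + pb i * pb k + pb i * pb i) * tau i * tau i
        = sg (pb i) from c_right i k]

private lemma comm1 (i k l : Fin (NN n)) (s : ℕ) :
    TT n i i 1 * TT n k l s - TT n k l s * TT n i i 1
      = (if k = i then sg (pb i) • TT n i l s else 0)
        - (if i = l then sg (pb i) • TT n k i s else 0)
        - (if k = pr i then sg (pb i) • TT n (pr i) l s else 0)
        + (if l = pr i then sg (pb i) • TT n k (pr i) s else 0) := by
  have h := XXE_c1 (n := n) i i k l s
  rw [TCom_left_zero_diag, TCom_left_zero_diag, smul_zero, smul_zero, neg_zero, zero_add,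
    sub_zero] at h
  rw [TCom, sg_even, one_smul] at h
  rw [h, mkA_diag, mkB_diag]
  abel

/-- The weights for the grading element. -/
def ww (n : ℕ) (i : Fin (NN n)) : ℂ := (((i : ℕ) : ℂ) - (n : ℂ)) / 2

/-- The grading element `h` of the extended Yangian. -/
def hh (n : ℕ) : XX n := ∑ i : Fin (NN n), ww n i • TT n i i 1

private lemma pr_val (k : Fin (NN n)) : ((pr k : ℕ) : ℂ) = 2 * (n : ℂ) - ((k : ℕ) : ℂ) := by
  have hk : (k : ℕ) ≤ 2 * n := by
    have hk2 : (k : ℕ) < 2 * n + 1 := k.isLt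
    omega
  unfold pr idx
  simp only []
  push_cast [Nat.cast_sub hk]
  ring

private lemma Wval (k : Fin (NN n)) :
    ww n k * sg (pb k) - ww n (pr k) * sg (pb k) = (n : ℂ) - ((k : ℕ) : ℂ) := by
  have h := pr_val k
  rcases eq_or_ne ((k : ℕ)) n with hk | hk
  · have hk' : ((k : ℕ) : ℂ) = (n : ℂ) := by exact_mod_cast hk
    simp only [ww, pb, sg, if_pos hk, pow_zero, h, hk']
    ring
  · simp only [ww, pb, sg, if_neg hk, pow_one, h]
    ring

theorem comm_h (k l : Fin (NN n)) (s : ℕ) :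
    hh n * TT n k l s = TT n k l s * hh n + (((l : ℕ) : ℂ) - ((k : ℕ) : ℂ)) • TT n k l s := by
  have key : hh n * TT n k l s - TT n k l s * hh n
      = (((l : ℕ) : ℂ) - ((k : ℕ) : ℂ)) • TT n k l s := by
    rw [hh, Finset.sum_mul, Finset.mul_sum, ← Finset.sum_sub_distrib]
    have hterm : ∀ i ∈ univ,
        (ww n i • TT n i i 1 * TT n k l s - TT n k l s * (ww n i • TT n i i 1))
        = ((if k = i then (ww n i * sg (pb i)) • TT n i l s else 0)
            - (if i = l then (ww n i * sg (pb i)) • TT n k i s else 0))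
          - (if pr k = i then (ww n i * sg (pb i)) • TT n (pr i) l s else 0)
          + (if pr l = i then (ww n i * sg (pb i)) • TT n k (pr i) s else 0) := by
      intro i _
      rw [smul_mul_assoc, mul_smul_comm, (smul_sub (ww n i) (TT n i i 1 * TT n k l s)
        (TT n k l s * TT n i i 1)).symm, comm1]
      simp only [pr_eq_iff, smul_sub, smul_add, smul_ite, smul_zero, smul_smul]
    rw [Finset.sum_congr rfl hterm]
    simp only [Finset.sum_add_distrib, Finset.sum_sub_distrib, Finset.sum_ite_eq,
      Finset.sum_ite_eq', Finset.mem_univ, if_true]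
    rw [pr_pr, pr_pr, pb_pr, pb_pr]
    have hk := Wval (n := n) k
    have hl := Wval (n := n) l
    rw [show ww n k * sg (pb k) = (ww n k * sg (pb k) - ww n (pr k) * sg (pb k))
        + ww n (pr k) * sg (pb k) by ring, hk]
    rw [show ww n l * sg (pb l) = (ww n l * sg (pb l) - ww n (pr l) * sg (pb l))
        + ww n (pr l) * sg (pb l) by ring, hl]
    module
  have : TT n k l s * hh n + (hh n * TT n k l s - TT n k l s * hh n)
      = hh n * TT n k l s := by abel
  rw [← this, key]

end CartanComm

end OspYangian

namespace OspYangian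

open Finset

section ModuleTheory

variable {n : ℕ} {V : Type*} [AddCommGroup V] [Module ℂ V] [Module (XX n) V]
  [IsScalarTower ℂ (XX n) V]

/-- Letters indexing the generators `t_{ij}^{(r+1)}`. -/
abbrev Letter (n : ℕ) := Fin (NN n) × Fin (NN n) × ℕ

/-- The generator associated to a letter. -/
def genL (g : Letter n) : XX n := TT n g.1 g.2.1 (g.2.2 + 1)

/-- The degree of a letter. -/
def degL (g : Letter n) : ℕ := g.2.2 + 1

/-- The total degree of a word. -/
def wdeg (L : List (Letter n)) : ℕ := (L.map degL).sum

/-- The product of the generators of a word. -/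
def prodw (L : List (Letter n)) : XX n := (L.map genL).prod

/-- A word consisting of lowering/diagonal letters only. -/
def LowDiag (L : List (Letter n)) : Prop := ∀ g ∈ L, g.2.1 ≤ g.1

private lemma prodw_nil : prodw ([] : List (Letter n)) = 1 := by simp [prodw]

private lemma prodw_cons (g : Letter n) (L : List (Letter n)) :
    prodw (g :: L) = genL g * prodw L := by simp [prodw]

private lemma wdeg_nil : wdeg ([] : List (Letter n)) = 0 := by simp [wdeg]

private lemma wdeg_cons (g : Letter n) (L : List (Letter n)) :
    wdeg (g :: L) = degL g + wdeg L := by simp [wdeg]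

private lemma degL_pos (g : Letter n) : 1 ≤ degL g := by unfold degL; omega

private lemma lowdiag_nil : LowDiag ([] : List (Letter n)) :=
  fun x hx => absurd hx List.not_mem_nil

private lemma lowdiag_cons {g : Letter n} {L : List (Letter n)} (hg : g.2.1 ≤ g.1)
    (hL : LowDiag L) : LowDiag (g :: L) := by
  intro x hx
  rcases List.mem_cons.mp hx with h | h
  · subst h; exact hg
  · exact hL x h

end ModuleTheory

section SpanDefs

/-- Graded pieces of the span of lowering/diagonal words applied to `ξ`. -/
def Uspan (n : ℕ) {V : Type*} [AddCommGroup V] [Module ℂ V] [Module (XX n) V]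
    (ξ : V) (m : ℕ) : Submodule ℂ V :=
  Submodule.span ℂ {x | ∃ L : List (Letter n), LowDiag L ∧ wdeg L ≤ m ∧ x = prodw L • ξ}

/-- The span of all lowering/diagonal words applied to `ξ`. -/
def UA (n : ℕ) {V : Type*} [AddCommGroup V] [Module ℂ V] [Module (XX n) V]
    (ξ : V) : Submodule ℂ V :=
  Submodule.span ℂ {x | ∃ L : List (Letter n), LowDiag L ∧ x = prodw L • ξ}

end SpanDefs

section ModuleTheory2

variable {n : ℕ} {V : Type*} [AddCommGroup V] [Module ℂ V] [Module (XX n) V]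
  [IsScalarTower ℂ (XX n) V]

private lemma Uspan_mono (ξ : V) {m m' : ℕ} (h : m ≤ m') : Uspan n ξ m ≤ Uspan n ξ m' := by
  apply Submodule.span_mono
  rintro x ⟨L, h1, h2, rfl⟩
  exact ⟨L, h1, le_trans h2 h, rfl⟩

private lemma Uspan_le_UA (ξ : V) (m : ℕ) : Uspan n ξ m ≤ UA n ξ := by
  apply Submodule.span_mono
  rintro x ⟨L, h1, _, rfl⟩
  exact ⟨L, h1, rfl⟩

private lemma mem_Uspan (ξ : V) {m : ℕ} (L : List (Letter n)) (h1 : LowDiag L)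
    (h2 : wdeg L ≤ m) : prodw L • ξ ∈ Uspan n ξ m :=
  Submodule.subset_span ⟨L, h1, h2, rfl⟩

private lemma gen_smul_U (ξ : V) (g : Letter n) (hg : g.2.1 ≤ g.1) {k : ℕ} {x : V}
    (hx : x ∈ Uspan n ξ k) : genL g • x ∈ Uspan n ξ (k + degL g) := by
  induction hx using Submodule.span_induction with
  | mem x hm =>
    obtain ⟨L, h1, h2, rfl⟩ := hm
    rw [← mul_smul, ← prodw_cons]
    refine mem_Uspan ξ (g :: L) (lowdiag_cons hg h1) ?_
    rw [wdeg_cons]; omega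
  | zero => rw [smul_zero]; exact Submodule.zero_mem _
  | add x y _ _ h1 h2 => rw [smul_add]; exact Submodule.add_mem _ h1 h2
  | smul c x _ h1 => rw [smul_comm_alg]; exact Submodule.smul_mem _ _ h1

theorem Cspan (ξ : V) (hup : ∀ g : Letter n, g.1 < g.2.1 → genL g • ξ = 0) :
    ∀ m : ℕ, ∀ L : List (Letter n), wdeg L ≤ m → prodw L • ξ ∈ Uspan n ξ m := by
  intro m
  induction m using Nat.strong_induction_on with
  | _ m IH =>
    have Rlem : ∀ L : List (Letter n), LowDiag L → ∀ e : Letter n, e.1 < e.2.1 →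
        degL e + wdeg L ≤ m → genL e • (prodw L • ξ) ∈ Uspan n ξ (degL e + wdeg L) := by
      intro L
      induction L with
      | nil =>
        intro _ e he _
        rw [prodw_nil, one_smul, hup e he]
        exact Submodule.zero_mem _
      | cons g L' IHL =>
        intro hLD e he hdeg
        have hg : g.2.1 ≤ g.1 := hLD g List.mem_cons_self
        have hLD' : LowDiag L' := fun x hx => hLD x (List.mem_cons_of_mem _ hx)
        have hWc := wdeg_cons g L'
        have hd1 := degL_pos g
        have hd2 := degL_pos e
        rw [prodw_cons, mul_smul, ← mul_smul (genL e) (genL g)]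
        have hsw : genL e * genL g
            = sg ((pb e.1 + pb e.2.1) * (pb g.1 + pb g.2.1)) • (genL g * genL e)
              + TCom n e.1 e.2.1 g.1 g.2.1 (degL e) (degL g) := by
          unfold TCom genL degL
          abel
        rw [hsw, add_smul, smul_assoc]
        apply Submodule.add_mem
        · apply Submodule.smul_mem
          rw [mul_smul]
          have h1 : genL e • (prodw L' • ξ) ∈ Uspan n ξ (degL e + wdeg L') :=
            IHL hLD' e he (by omega)
          have h2 := gen_smul_U ξ g hg h1
          refine Uspan_mono ξ (by omega) h2
        · have hmem := TCom_mem (n := n) e.1 e.2.1 g.1 g.2.1 (degL g) (degL e)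
          set D := degL e + degL g - 1 with hD
          have key : ∀ z ∈ DD n D, z • (prodw L' • ξ) ∈ Uspan n ξ (degL e + wdeg (g :: L')) := by
            intro z hz
            induction hz using Submodule.span_induction with
            | mem z hm =>
              rcases hm with ⟨a,b,c,d,p,q,hp,hq,hpq,rfl⟩ | ⟨a,b,p,hp,hpm,rfl⟩ | rfl
              · have hTT1 : TT n a b p = genL (a, b, p - 1) := by
                  unfold genL; simp only []; rw [Nat.sub_add_cancel hp]
                have hTT2 : TT n c d q = genL (c, d, q - 1) := by
                  unfold genL; simp only []; rw [Nat.sub_add_cancel hq]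
                rw [hTT1, hTT2, mul_smul,
                  ← mul_smul (genL (a, b, p - 1)) (genL (c, d, q - 1)) (prodw L' • ξ),
                  ← mul_smul (genL (a, b, p - 1) * genL (c, d, q - 1)) (prodw L') ξ,
                  mul_assoc, ← prodw_cons, ← prodw_cons]
                have hdw : wdeg ((a, b, p - 1) :: (c, d, q - 1) :: L') = p + q + wdeg L' := by
                  rw [wdeg_cons, wdeg_cons]
                  unfold degL
                  simp only []
                  omega
                have hIH := IH (p + q + wdeg L') (by omega) ((a, b, p - 1) :: (c, d, q - 1) :: L')
                  (le_of_eq hdw)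
                exact Uspan_mono ξ (by omega) hIH
              · have hTT1 : TT n a b p = genL (a, b, p - 1) := by
                  unfold genL; simp only []; rw [Nat.sub_add_cancel hp]
                rw [hTT1, ← mul_smul (genL (a, b, p - 1)) (prodw L') ξ, ← prodw_cons]
                have hdw : wdeg ((a, b, p - 1) :: L') = p + wdeg L' := by
                  rw [wdeg_cons]
                  unfold degL
                  simp only []
                  omega
                have hIH := IH (p + wdeg L') (by omega) ((a, b, p - 1) :: L') (le_of_eq hdw)
                exact Uspan_mono ξ (by omega) hIH
              · rw [one_smul]
                exact Uspan_mono ξ (by omega) (IH (wdeg L') (by omega) L' le_rfl)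
            | zero => rw [zero_smul]; exact Submodule.zero_mem _
            | add x y _ _ hx hy => rw [add_smul]; exact Submodule.add_mem _ hx hy
            | smul c x _ hx => rw [smul_assoc]; exact Submodule.smul_mem _ _ hx
          exact Uspan_mono ξ (by omega) (key _ hmem)
    intro L hL
    cases L with
    | nil =>
      exact mem_Uspan ξ [] lowdiag_nil (by rw [wdeg_nil]; omega)
    | cons g L' =>
      have hWc := wdeg_cons g L'
      have hd1 := degL_pos g
      have h1 : prodw L' • ξ ∈ Uspan n ξ (m - degL g) :=
        IH (m - degL g) (by omega) L' (by omega)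
      rw [prodw_cons, mul_smul]
      by_cases hg : g.2.1 ≤ g.1
      · have h2 := gen_smul_U ξ g hg h1
        rwa [Nat.sub_add_cancel (by omega)] at h2
      · push_neg at hg
        refine Submodule.span_induction
          (p := fun x _ => genL g • x ∈ Uspan n ξ m) ?_ ?_ ?_ ?_ h1
        · rintro x ⟨L2, hl2, hw2, rfl⟩
          have := Rlem L2 hl2 g hg (by omega)
          exact Uspan_mono ξ (by omega) this
        · show genL g • (0 : V) ∈ Uspan n ξ m
          rw [smul_zero]; exact Submodule.zero_mem _
        · intro x y _ _ hx hy
          show genL g • (x + y) ∈ Uspan n ξ m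
          rw [smul_add]; exact Submodule.add_mem _ hx hy
        · intro c x _ hx
          show genL g • (c • x) ∈ Uspan n ξ m
          rw [smul_comm_alg]; exact Submodule.smul_mem _ _ hx

private lemma list_lift (l : List (XX n)) (h : ∀ z ∈ l, z ∈ Set.range (genL (n := n))) :
    ∃ L : List (Letter n), l = L.map genL := by
  induction l with
  | nil => exact ⟨[], rfl⟩
  | cons z l' IHl =>
    obtain ⟨L', hL'⟩ := IHl (fun x hx => h x (List.mem_cons_of_mem _ hx))
    obtain ⟨g, hg⟩ := h z List.mem_cons_self
    exact ⟨g :: L', by rw [List.map_cons, hg, hL']⟩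

private lemma genL_eq_mk (p : Letter n) :
    RingQuot.mkAlgHom ℂ (yrel n) (FreeAlgebra.ι ℂ p) = genL p := by
  have h : fgen n p.1 p.2.1 (p.2.2 + 1) = FreeAlgebra.ι ℂ p := by simp [fgen]
  unfold genL TT
  rw [h]

theorem allspan (ξ : V) (hs : Submodule.span (XX n) {ξ} = ⊤)
    (hup : ∀ g : Letter n, g.1 < g.2.1 → genL g • ξ = 0) (v : V) : v ∈ UA n ξ := by
  have hv : v ∈ Submodule.span (XX n) {ξ} := by rw [hs]; trivial
  obtain ⟨x, rfl⟩ := Submodule.mem_span_singleton.mp hv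
  clear hv
  have hadj : Algebra.adjoin ℂ (Set.range (genL (n := n))) = ⊤ := by
    rw [eq_top_iff]
    rintro y -
    obtain ⟨z, rfl⟩ := RingQuot.mkAlgHom_surjective ℂ (yrel n) y
    have hz : z ∈ Algebra.adjoin ℂ (Set.range (FreeAlgebra.ι ℂ)) := by
      rw [FreeAlgebra.adjoin_range_ι]; trivial
    have h2 : RingQuot.mkAlgHom ℂ (yrel n) z ∈
        (Algebra.adjoin ℂ (Set.range (FreeAlgebra.ι ℂ))).map (RingQuot.mkAlgHom ℂ (yrel n)) :=
      Subalgebra.mem_map.mpr ⟨z, hz, rfl⟩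
    rw [AlgHom.map_adjoin] at h2
    have h3 : (RingQuot.mkAlgHom ℂ (yrel n)) '' (Set.range (FreeAlgebra.ι ℂ))
        = Set.range (genL (n := n)) := by
      rw [← Set.range_comp]
      have : (⇑(RingQuot.mkAlgHom ℂ (yrel n)) ∘ FreeAlgebra.ι ℂ) = genL (n := n) :=
        funext genL_eq_mk
      rw [this]
    rwa [h3] at h2
  have hx : x ∈ Submodule.span ℂ
      ((Submonoid.closure (Set.range (genL (n := n))) : Submonoid (XX n)) : Set (XX n)) := by
    have hx0 : x ∈ Subalgebra.toSubmodule (Algebra.adjoin ℂ (Set.range (genL (n := n)))) := by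
      rw [hadj]; trivial
    rwa [Algebra.adjoin_eq_span] at hx0
  induction hx using Submodule.span_induction with
  | mem y hm =>
    obtain ⟨l, hl, rfl⟩ := Submonoid.exists_list_of_mem_closure hm
    obtain ⟨L, rfl⟩ := list_lift l hl
    have heq : (L.map genL).prod • ξ = prodw L • ξ := rfl
    rw [heq]
    exact Uspan_le_UA ξ (wdeg L) (Cspan ξ hup (wdeg L) L le_rfl)
  | zero => rw [zero_smul]; exact Submodule.zero_mem _
  | add x y _ _ hx hy => rw [add_smul]; exact Submodule.add_mem _ hx hy
  | smul c x _ hx => rw [smul_assoc]; exact Submodule.smul_mem _ _ hx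

theorem eig_word (ξ : V) (lam : Fin (NN n) → ℕ → ℂ)
    (hdiag : ∀ (i : Fin (NN n)) (r : ℕ), TT n i i r • ξ = lam i r • ξ)
    (Λ : ℂ) (hΛ : hh n • ξ = Λ • ξ) :
    ∀ L : List (Letter n), LowDiag L →
      ∃ g : ℤ, g ≤ 0 ∧ hh n • (prodw L • ξ) = (Λ + (g : ℂ)) • (prodw L • ξ)
        ∧ (g = 0 → ∃ c : ℂ, prodw L • ξ = c • ξ) := by
  intro L
  induction L with
  | nil =>
    intro _
    refine ⟨0, le_refl 0, ?_, fun _ => ⟨1, by rw [prodw_nil, one_smul, one_smul]⟩⟩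
    rw [prodw_nil, one_smul, hΛ]
    norm_num
  | cons g L' IHL =>
    intro hLD
    obtain ⟨gz, hgz, heig, hsc⟩ := IHL (fun x hx => hLD x (List.mem_cons_of_mem _ hx))
    have hg : g.2.1 ≤ g.1 := hLD g List.mem_cons_self
    have hgN : (g.2.1 : ℕ) ≤ (g.1 : ℕ) := hg
    refine ⟨gz + ((g.2.1 : ℕ) : ℤ) - ((g.1 : ℕ) : ℤ), by omega, ?_, ?_⟩
    · rw [prodw_cons, mul_smul]
      have hch := comm_h (n := n) g.1 g.2.1 (g.2.2 + 1)
      have hmain : hh n • (genL g • (prodw L' • ξ))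
          = ((Λ + (gz : ℂ)) + ((((g.2.1 : ℕ) : ℂ)) - (((g.1 : ℕ) : ℂ))))
              • (genL g • (prodw L' • ξ)) := by
        rw [← mul_smul (hh n) (genL g) (prodw L' • ξ)]
        unfold genL
        rw [hch, add_smul, mul_smul, heig, smul_comm_alg, smul_assoc, ← add_smul]
      rw [hmain]
      congr 1
      push_cast
      ring
    · intro h0
      have h1 : gz = 0 := by omega
      have h2 : (g.2.1 : ℕ) = (g.1 : ℕ) := by omega
      obtain ⟨c, hc⟩ := hsc h1
      have hgg : g.2.1 = g.1 := Fin.ext h2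
      rw [prodw_cons, mul_smul, hc, smul_comm_alg]
      unfold genL
      rw [hgg, hdiag g.1 (g.2.2 + 1), smul_smul]
      exact ⟨c * lam g.1 (g.2.2 + 1), rfl⟩

end ModuleTheory2

end OspYangian

namespace OspYangian

/-- In a finite-dimensional irreducible representation of `X(osp_{1|2n})`,
a highest vector is determined uniquely up to a constant factor. -/
theorem highest_vector_unique
    (n : ℕ) (hn : 1 ≤ n) (V : Type) [AddCommGroup V] [Module ℂ V]
    [Module (XX n) V] [IsScalarTower ℂ (XX n) V]
    [FiniteDimensional ℂ V] (hV : IsSimpleModule (XX n) V)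
    (ξ ξ' : V)
    (hξ : ξ ≠ 0 ∧ (∀ i j : Fin (NN n), i < j → ∀ r : ℕ, TT n i j r • ξ = 0) ∧
      ∃ lam : Fin (NN n) → ℕ → ℂ, ∀ (i : Fin (NN n)) (r : ℕ),
        TT n i i r • ξ = lam i r • ξ)
    (hξ' : ξ' ≠ 0 ∧ (∀ i j : Fin (NN n), i < j → ∀ r : ℕ, TT n i j r • ξ' = 0) ∧
      ∃ mu : Fin (NN n) → ℕ → ℂ, ∀ (i : Fin (NN n)) (r : ℕ),
        TT n i i r • ξ' = mu i r • ξ') :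
    ∃ c : ℂ, ξ' = c • ξ := by
  classical
  obtain ⟨hx0, hxup, lam, hxdiag⟩ := hξ
  obtain ⟨hy0, hyup, mu, hydiag⟩ := hξ'
  haveI := hV
  haveI : NoZeroSMulDivisors ℂ V := by
    refine ⟨fun {c x} h => ?_⟩
    rcases eq_or_ne c 0 with hc | hc
    · exact Or.inl hc
    · refine Or.inr ?_
      have := congrArg (fun v => c⁻¹ • v) h
      simpa [smul_smul, inv_mul_cancel₀ hc] using this
  -- both vectors generate V
  have hsx : Submodule.span (XX n) {ξ} = ⊤ := by
    rcases eq_bot_or_eq_top (Submodule.span (XX n) {ξ}) with h | h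
    · exfalso
      apply hx0
      have hmem : ξ ∈ Submodule.span (XX n) {ξ} := Submodule.mem_span_singleton_self ξ
      rw [h] at hmem
      simpa using hmem
    · exact h
  have hsy : Submodule.span (XX n) {ξ'} = ⊤ := by
    rcases eq_bot_or_eq_top (Submodule.span (XX n) {ξ'}) with h | h
    · exfalso
      apply hy0
      have hmem : ξ' ∈ Submodule.span (XX n) {ξ'} := Submodule.mem_span_singleton_self ξ'
      rw [h] at hmem
      simpa using hmem
    · exact h
  have hupx : ∀ g : Letter n, g.1 < g.2.1 → genL g • ξ = 0 :=
    fun g hg => hxup g.1 g.2.1 hg (g.2.2 + 1)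
  have hupy : ∀ g : Letter n, g.1 < g.2.1 → genL g • ξ' = 0 :=
    fun g hg => hyup g.1 g.2.1 hg (g.2.2 + 1)
  set Λ : ℂ := ∑ i : Fin (NN n), ww n i * lam i 1 with hΛdef
  set Mu : ℂ := ∑ i : Fin (NN n), ww n i * mu i 1 with hMudef
  have hΛ : hh n • ξ = Λ • ξ := by
    rw [hh, Finset.sum_smul, hΛdef, Finset.sum_smul]
    refine Finset.sum_congr rfl fun i _ => ?_
    rw [smul_assoc, hxdiag i 1, smul_smul]
  have hMu : hh n • ξ' = Mu • ξ' := by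
    rw [hh, Finset.sum_smul, hMudef, Finset.sum_smul]
    refine Finset.sum_congr rfl fun i _ => ?_
    rw [smul_assoc, hydiag i 1, smul_smul]
  let f : Module.End ℂ V :=
    { toFun := fun v => hh n • v
      map_add' := fun x y => smul_add (hh n) x y
      map_smul' := fun c v => smul_comm_alg c (hh n) v }
  have hword := eig_word ξ lam hxdiag Λ hΛ
  have hword' := eig_word ξ' mu hydiag Mu hMu
  -- step 1 : Mu = Λ
  have hMuS : ∃ g : ℤ, g ≤ 0 ∧ Mu = Λ + (g : ℂ) := by
    have hUAle : UA n ξ ≤ ⨆ a ∈ {z : ℂ | ∃ g : ℤ, g ≤ 0 ∧ z = Λ + (g : ℂ)},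
        f.eigenspace a := by
      rw [UA, Submodule.span_le]
      rintro x ⟨L, hLD, rfl⟩
      obtain ⟨g, hg, heig, -⟩ := hword L hLD
      have hx : prodw L • ξ ∈ f.eigenspace (Λ + (g : ℂ)) :=
        Module.End.mem_eigenspace_iff.mpr heig
      have hmem : (Λ + (g:ℂ)) ∈ {z : ℂ | ∃ g : ℤ, g ≤ 0 ∧ z = Λ + (g : ℂ)} := ⟨g, hg, rfl⟩
      exact (le_biSup (fun a => f.eigenspace a) hmem) hx
    have hy'mem : ξ' ∈ ⨆ a ∈ {z : ℂ | ∃ g : ℤ, g ≤ 0 ∧ z = Λ + (g : ℂ)}, f.eigenspace a :=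
      hUAle (allspan ξ hsx hupx ξ')
    by_contra hc
    have hdisj : Disjoint (f.eigenspace Mu)
        (⨆ a ∈ {z : ℂ | ∃ g : ℤ, g ≤ 0 ∧ z = Λ + (g : ℂ)}, f.eigenspace a) :=
      (Module.End.eigenspaces_iSupIndep f).disjoint_biSup hc
    have h1 : ξ' ∈ f.eigenspace Mu := Module.End.mem_eigenspace_iff.mpr hMu
    exact hy0 (Submodule.disjoint_def.mp hdisj ξ' h1 hy'mem)
  have hΛS : ∃ g : ℤ, g ≤ 0 ∧ Λ = Mu + (g : ℂ) := by
    have hUAle : UA n ξ' ≤ ⨆ a ∈ {z : ℂ | ∃ g : ℤ, g ≤ 0 ∧ z = Mu + (g : ℂ)},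
        f.eigenspace a := by
      rw [UA, Submodule.span_le]
      rintro x ⟨L, hLD, rfl⟩
      obtain ⟨g, hg, heig, -⟩ := hword' L hLD
      have hx : prodw L • ξ' ∈ f.eigenspace (Mu + (g : ℂ)) :=
        Module.End.mem_eigenspace_iff.mpr heig
      have hmem : (Mu + (g:ℂ)) ∈ {z : ℂ | ∃ g : ℤ, g ≤ 0 ∧ z = Mu + (g : ℂ)} := ⟨g, hg, rfl⟩
      exact (le_biSup (fun a => f.eigenspace a) hmem) hx
    have hymem : ξ ∈ ⨆ a ∈ {z : ℂ | ∃ g : ℤ, g ≤ 0 ∧ z = Mu + (g : ℂ)}, f.eigenspace a :=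
      hUAle (allspan ξ' hsy hupy ξ)
    by_contra hc
    have hdisj : Disjoint (f.eigenspace Λ)
        (⨆ a ∈ {z : ℂ | ∃ g : ℤ, g ≤ 0 ∧ z = Mu + (g : ℂ)}, f.eigenspace a) :=
      (Module.End.eigenspaces_iSupIndep f).disjoint_biSup hc
    have h1 : ξ ∈ f.eigenspace Λ := Module.End.mem_eigenspace_iff.mpr hΛ
    exact hx0 (Submodule.disjoint_def.mp hdisj ξ h1 hymem)
  obtain ⟨g1, hg1, hMuEq⟩ := hMuS
  obtain ⟨g2, hg2, hΛEq⟩ := hΛS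
  have hMuΛ : Mu = Λ := by
    have h3 : Λ = Λ + ((g1 : ℂ) + (g2 : ℂ)) := by
      conv_lhs => rw [hΛEq, hMuEq]
      ring
    have h4 : (g1 : ℂ) + (g2 : ℂ) = 0 := (left_eq_add.mp h3)
    have h5 : g1 + g2 = 0 := by exact_mod_cast h4
    have hg1z : g1 = 0 := by omega
    rw [hMuEq, hg1z]
    simp
  -- step 2 : split off the ℂ ξ component
  have hUA2 : UA n ξ ≤ (Submodule.span ℂ {ξ}) ⊔ (⨆ a ∈ {z : ℂ | z ≠ Λ}, f.eigenspace a) := by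
    rw [UA, Submodule.span_le]
    rintro x ⟨L, hLD, rfl⟩
    obtain ⟨g, hg, heig, hsc⟩ := hword L hLD
    rcases eq_or_ne g 0 with h0 | h0
    · obtain ⟨c, hc⟩ := hsc h0
      apply Submodule.mem_sup_left
      rw [hc]
      exact Submodule.smul_mem _ _ (Submodule.mem_span_singleton_self ξ)
    · apply Submodule.mem_sup_right
      have hx : prodw L • ξ ∈ f.eigenspace (Λ + (g : ℂ)) :=
        Module.End.mem_eigenspace_iff.mpr heig
      have hne : Λ + (g : ℂ) ≠ Λ := by
        intro hE
        apply h0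
        have h6 : (g : ℂ) = 0 := by
          have := left_eq_add.mp hE.symm
          exact this
        exact_mod_cast h6
      have hmem : (Λ + (g:ℂ)) ∈ {z : ℂ | z ≠ Λ} := hne
      exact (le_biSup (fun a => f.eigenspace a) hmem) hx
  have hy'2 : ξ' ∈ (Submodule.span ℂ {ξ}) ⊔ (⨆ a ∈ {z : ℂ | z ≠ Λ}, f.eigenspace a) :=
    hUA2 (allspan ξ hsx hupx ξ')
  obtain ⟨y, hy, z, hz, hyz⟩ := Submodule.mem_sup.mp hy'2
  obtain ⟨c, rfl⟩ := Submodule.mem_span_singleton.mp hy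
  refine ⟨c, ?_⟩
  have hz2 : z ∈ f.eigenspace Λ := by
    have hz' : z = ξ' - c • ξ := by rw [← hyz]; abel
    rw [Module.End.mem_eigenspace_iff, hz']
    show hh n • (ξ' - c • ξ) = Λ • (ξ' - c • ξ)
    rw [smul_sub, smul_sub, smul_comm_alg, hΛ, hMu, hMuΛ, smul_comm Λ c ξ]
  have hdisj : Disjoint (f.eigenspace Λ) (⨆ a ∈ {z : ℂ | z ≠ Λ}, f.eigenspace a) :=
    (Module.End.eigenspaces_iSupIndep f).disjoint_biSup (by simp)
  have hz0 : z = 0 := Submodule.disjoint_def.mp hdisj z hz2 hz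
  rw [← hyz, hz0, add_zero]

end OspYangian
end
end

section
/- For 1 ≤ k ≤ n, let T_{ij}(u) be the operators on (ℂ^{1|2n})^{⊗k} defined by T_{ij}(u) = Σ_{a_1,…,a_{k−1}=1}^{2n+1} t_{ia_1}(u)⊗t_{a_1a_2}(u−1)⊗…⊗t_{a_{k−1}j}(u−k+1), where each factor acts on its copy of ℂ^{1|2n} via the vector representation. Then the antisymmetric vector ξ_k = Σ_{σ∈S_k} sgn(σ)·e_{σ(1)}⊗…⊗e_{σ(k)} satisfies T_{ij}(u)ξ_k = 0 for all 1 ≤ i < j ≤ n+1. -/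
/-!
Common definitions for the Yangian `X(osp_{1|2n})` associated with the orthosymplectic
Lie superalgebra `osp(1|2n)`, following Molev, "Representations of the Yangians
associated with Lie superalgebras osp(1|2n)".

Indices are 0-based: the index set {1,…,2n+1} of the paper corresponds to `Fin (2n+1)`,
the involution i ↦ i′ = 2n−i+2 corresponds to `pr : i ↦ 2n−i`, the parity ī is 1 unless
i is the middle index `n`, and τ_i = 1 for i ≤ n and −1 for i > n.

The extended Yangian is presented by the coefficients `t_{ij}^{(r)}` (`r ≥ 1`) of the series
`t_{ij}(u) = δ_{ij} + Σ_{r≥1} t_{ij}^{(r)} u^{−r}`, subject to the defining RTT relations,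
written in the equivalent explicit component form (formula (2.9) of the paper), with
denominators cleared.  Working with the variables `x = u⁻¹` and `y = v⁻¹`, so that
`u − v = (y−x)/(xy)` and `u − v − κ = (y − x − κxy)/(xy)`, the relation
`[t_{ij}(u), t_{kl}(v)] = (u−v)⁻¹ (⋯) − (u−v−κ)⁻¹ (⋯)` becomes the power series identity
`relL = relR` below, and the Yangian is the quotient of the free algebra by the
coefficient-wise relations.
-/

noncomputable section

namespace OspYangian


section XiAux

open Finset

variable {n k : ℕ}

lemma coe_pr (x : Fin (NN n)) : ((pr x : Fin (NN n)) : ℕ) = 2 * n - (x : ℕ) := rfl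

lemma pb_eq_one {x : Fin (NN n)} (h : (x : ℕ) < n) : pb x = 1 := by
  unfold pb
  rw [if_neg (by omega)]

lemma vrepE_cross {u' : ℂ} {a b cc d : Fin (NN n)} (ha : (a : ℕ) < n) (hb : n ≤ (b : ℕ))
    (hd : (d : ℕ) < n) : vrepE n u' a b cc d = 0 := by
  have h1 : ¬(a = b ∧ cc = d) := by
    rintro ⟨h, -⟩; have := congrArg Fin.val h; omega
  have h2 : ¬(cc = a ∧ d = b) := by
    rintro ⟨-, h⟩; have := congrArg Fin.val h; omega
  have h3 : ¬(cc = pr b ∧ d = pr a) := by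
    rintro ⟨-, h⟩
    have := congrArg Fin.val h
    rw [coe_pr] at this; omega
  simp [vrepE, h1, h2, h3]

lemma vrepE_low {u' : ℂ} {a b cc d : Fin (NN n)} (ha : (a : ℕ) < n) (hb : (b : ℕ) < n)
    (hd : (d : ℕ) < n) :
    vrepE n u' a b cc d =
      (if a = b ∧ cc = d then (1 : ℂ) else 0)
        - u'⁻¹ * (if cc = a ∧ d = b then (1 : ℂ) else 0) := by
  have h3 : ¬(cc = pr b ∧ d = pr a) := by
    rintro ⟨-, h⟩; have := congrArg Fin.val h; rw [coe_pr] at this; omega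
  rw [vrepE, pb_eq_one ha]
  simp only [if_neg h3, sg, pow_one, mul_zero, sub_zero]
  ring

lemma kosz_one {a : Fin (k + 1) → Fin (NN n)} (ha : ∀ q, ((a q : ℕ)) < n)
    (d : Fin k → Fin (NN n)) : kosz n k a d = 1 := by
  unfold kosz
  have h : ∀ p : Fin k,
      (pb (a p.castSucc) + pb (a p.succ)) *
        (∑ q : Fin k, if (q : ℕ) < (p : ℕ) then pb (d q) else 0)
      = 2 * (∑ q : Fin k, if (q : ℕ) < (p : ℕ) then pb (d q) else 0) := by
    intro p; rw [pb_eq_one (ha _), pb_eq_one (ha _)]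
  rw [Finset.sum_congr rfl fun p _ => h p, ← Finset.mul_sum]
  unfold sg
  rw [pow_mul]
  norm_num

lemma crossing {a : Fin (k + 1) → Fin (NN n)} (h0 : ((a 0 : ℕ)) < n)
    (hq : ∃ q, n ≤ (a q : ℕ)) :
    ∃ p : Fin k, (a p.castSucc : ℕ) < n ∧ n ≤ (a p.succ : ℕ) := by
  by_contra hc
  push_neg at hc
  have key : ∀ m : ℕ, ∀ hm : m < k + 1, (a ⟨m, hm⟩ : ℕ) < n := by
    intro m
    induction m with
    | zero =>
      intro hm
      rw [show (⟨0, hm⟩ : Fin (k+1)) = 0 from Fin.ext (by simp)]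
      exact h0
    | succ m ih =>
      intro hm
      have hmk : m < k := by omega
      have h1 : (a (Fin.castSucc ⟨m, hmk⟩) : ℕ) < n := ih (by omega)
      have h2 := hc ⟨m, hmk⟩ h1
      exact h2
  obtain ⟨q, hq⟩ := hq
  have := key q.val q.isLt
  rw [Fin.eta] at this
  omega

/-- The path determined by a starting value, the jump values, and a set of jump positions. -/
def pathA (i : Fin (NN n)) (sh : Fin k → Fin (NN n)) (S : Finset (Fin k)) : ℕ → Fin (NN n)
  | 0 => i
  | m + 1 =>
    if h : m < k then
      if (⟨m, h⟩ : Fin k) ∈ S then sh ⟨m, h⟩ else pathA i sh S m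
    else pathA i sh S m

lemma pathA_zero (i : Fin (NN n)) (sh : Fin k → Fin (NN n)) (S : Finset (Fin k)) :
    pathA i sh S 0 = i := rfl

lemma pathA_succ_of_mem {i : Fin (NN n)} {sh : Fin k → Fin (NN n)} {S : Finset (Fin k)}
    {m : ℕ} (h : m < k) (hm : (⟨m, h⟩ : Fin k) ∈ S) :
    pathA i sh S (m + 1) = sh ⟨m, h⟩ := by
  rw [pathA, dif_pos h, if_pos hm]

lemma pathA_succ_of_not_mem {i : Fin (NN n)} {sh : Fin k → Fin (NN n)} {S : Finset (Fin k)}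
    {m : ℕ} (h : m < k) (hm : (⟨m, h⟩ : Fin k) ∉ S) :
    pathA i sh S (m + 1) = pathA i sh S m := by
  rw [pathA, dif_pos h, if_neg hm]

lemma pathA_succ_ge {i : Fin (NN n)} {sh : Fin k → Fin (NN n)} {S : Finset (Fin k)}
    {m : ℕ} (h : ¬ m < k) :
    pathA i sh S (m + 1) = pathA i sh S m := by
  rw [pathA, dif_neg h]

lemma pathA_stable {i : Fin (NN n)} {sh : Fin k → Fin (NN n)} {S : Finset (Fin k)}
    (m m' : ℕ) (hmm : m ≤ m') (hS : ∀ x ∈ S, (x : ℕ) < m ∨ m' ≤ (x : ℕ)) :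
    pathA i sh S m' = pathA i sh S m := by
  induction m' with
  | zero => rw [Nat.le_zero.mp hmm]
  | succ t ih =>
    rcases Nat.lt_or_ge t m with h1 | h1
    · have : m = t + 1 := by omega
      rw [this]
    · have step : pathA i sh S (t + 1) = pathA i sh S t := by
        by_cases h : t < k
        · refine pathA_succ_of_not_mem h ?_
          intro hmem
          rcases hS _ hmem with h2 | h2 <;> simp at h2 <;> omega
        · exact pathA_succ_ge h
      rw [step, ih h1]
      intro x hx
      rcases hS x hx with h2 | h2
      · exact Or.inl h2
      · exact Or.inr (by omega)

lemma pathA_empty (i : Fin (NN n)) (sh : Fin k → Fin (NN n)) (m : ℕ) :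
    pathA i sh ∅ m = i := by
  rw [pathA_stable 0 m (Nat.zero_le _) (by simp)]
  rfl

lemma pathA_congr {i : Fin (NN n)} {sh sh' : Fin k → Fin (NN n)} {S S' : Finset (Fin k)}
    (m : ℕ) (hSS : ∀ p : Fin k, (p : ℕ) < m → (p ∈ S ↔ p ∈ S'))
    (hsh : ∀ p ∈ S, (p : ℕ) < m → sh p = sh' p) :
    pathA i sh S m = pathA i sh' S' m := by
  induction m with
  | zero => rfl
  | succ t ih =>
    have ih' := ih (fun p hp => hSS p (by omega)) (fun p hp hp2 => hsh p hp (by omega))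
    by_cases h : t < k
    · by_cases hm : (⟨t, h⟩ : Fin k) ∈ S
      · rw [pathA_succ_of_mem h hm,
          pathA_succ_of_mem h ((hSS ⟨t, h⟩ (by simp)).mp hm),
          hsh _ hm (by simp)]
      · rw [pathA_succ_of_not_mem h hm,
          pathA_succ_of_not_mem h (fun h' => hm ((hSS ⟨t, h⟩ (by simp)).mpr h')), ih']
    · rw [pathA_succ_ge h, pathA_succ_ge h, ih']

lemma pathA_eval {i : Fin (NN n)} {sh : Fin k → Fin (NN n)} {S : Finset (Fin k)}
    {p' : Fin k} (hp' : p' ∈ S) {m : ℕ} (hm : (p' : ℕ) < m)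
    (hmax : ∀ x ∈ S, (x : ℕ) < m → x ≤ p') : pathA i sh S m = sh p' := by
  rw [pathA_stable ((p' : ℕ) + 1) m hm ?_]
  · rw [pathA_succ_of_mem p'.isLt (by simpa using hp')]
  · intro x hx
    by_cases h : (x : ℕ) < m
    · exact Or.inl (by have := hmax x hx h; omega)
    · exact Or.inr (by omega)

/-- The permutation σ viewed as a multi-index. -/
def shp (hkn : k ≤ NN n) (σ : Equiv.Perm (Fin k)) : Fin k → Fin (NN n) :=
  fun p => Fin.castLE hkn (σ p)

/-- The sign of a permutation as a complex number. -/
def sgnC (σ : Equiv.Perm (Fin k)) : ℂ := ((Equiv.Perm.sign σ : ℤ) : ℂ)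

lemma coe_shp (hkn : k ≤ NN n) (σ : Equiv.Perm (Fin k)) (p : Fin k) :
    ((shp hkn σ p : Fin (NN n)) : ℕ) = (σ p : ℕ) := rfl

/-- The collapsed value of a single (σ, S) term. -/
def W0 (hkn : k ≤ NN n) (u : ℂ) (c : Fin k → Fin (NN n)) (i j : Fin (NN n))
    (σ : Equiv.Perm (Fin k)) (S : Finset (Fin k)) : ℂ :=
  if pathA i (shp hkn σ) S k = j then
    (∏ p ∈ S, ((u - ((p : ℕ) : ℂ))⁻¹ *
        (if c p = pathA i (shp hkn σ) S (p : ℕ) then (1 : ℂ) else 0))) *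
      ∏ p ∈ Finset.univ \ S, (if c p = shp hkn σ p then (1 : ℂ) else 0)
  else 0

/-- The sum over permutations of the collapsed terms, for a fixed set of positions. -/
def GG (hkn : k ≤ NN n) (u : ℂ) (c : Fin k → Fin (NN n)) (i j : Fin (NN n))
    (S : Finset (Fin k)) : ℂ :=
  ∑ σ : Equiv.Perm (Fin k), sgnC σ * W0 hkn u c i j σ S

lemma topmat_eq (hkn : k ≤ n) (u : ℂ) (c : Fin k → Fin (NN n)) {i j : Fin (NN n)}
    (hin : (i : ℕ) < n) (σ : Equiv.Perm (Fin k)) :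
    TopMat n k u i j c (shp (le_NN hkn) σ) =
      ∑ a : Fin (k + 1) → Fin (NN n),
        if a 0 = i ∧ a (Fin.last k) = j then
          ∏ p : Fin k,
            (-((u - ((p : ℕ) : ℂ))⁻¹ *
                (if c p = a p.castSucc ∧ shp (le_NN hkn) σ p = a p.succ then (1 : ℂ) else 0))
              + (if a p.castSucc = a p.succ ∧ c p = shp (le_NN hkn) σ p then (1 : ℂ) else 0))
        else 0 := by
  unfold TopMat
  apply Finset.sum_congr rfl
  intro a _
  by_cases hcond : a 0 = i ∧ a (Fin.last k) = j
  · rw [if_pos hcond, if_pos hcond]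
    by_cases hlow : ∀ q, ((a q : ℕ)) < n
    · rw [kosz_one hlow, one_mul]
      apply Finset.prod_congr rfl
      intro p _
      rw [vrepE_low (hlow _) (hlow _) (by
        have : (σ p : ℕ) < k := (σ p).isLt
        have : ((shp (le_NN hkn) σ p : Fin (NN n)) : ℕ) < k := this
        omega)]
      ring
    · push_neg at hlow
      obtain ⟨p0, hp0⟩ := crossing (by rw [hcond.1]; exact hin) hlow
      have hd : ((shp (le_NN hkn) σ p0 : Fin (NN n)) : ℕ) < n := by
        have : (σ p0 : ℕ) < k := (σ p0).isLt
        have h2 : ((shp (le_NN hkn) σ p0 : Fin (NN n)) : ℕ) = (σ p0 : ℕ) := rfl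
        omega
      rw [Finset.prod_eq_zero (Finset.mem_univ p0) (vrepE_cross hp0.1 hp0.2 hd), mul_zero]
      rw [Finset.prod_eq_zero (Finset.mem_univ p0)]
      have h1 : ¬(c p0 = a p0.castSucc ∧ shp (le_NN hkn) σ p0 = a p0.succ) := by
        rintro ⟨-, h⟩
        have := congrArg Fin.val h
        have h2 : ((shp (le_NN hkn) σ p0 : Fin (NN n)) : ℕ) = (σ p0 : ℕ) := rfl
        have h3 : (σ p0 : ℕ) < k := (σ p0).isLt
        omega
      have h2 : ¬(a p0.castSucc = a p0.succ ∧ c p0 = shp (le_NN hkn) σ p0) := by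
        rintro ⟨h, -⟩
        have := congrArg Fin.val h
        omega
      rw [if_neg h1, if_neg h2]
      ring
  · rw [if_neg hcond, if_neg hcond]

lemma collapse (hkn : k ≤ NN n) (u : ℂ) (c : Fin k → Fin (NN n)) (i j : Fin (NN n))
    (σ : Equiv.Perm (Fin k)) (S : Finset (Fin k)) :
    (∑ a : Fin (k + 1) → Fin (NN n),
      if a 0 = i ∧ a (Fin.last k) = j then
        (∏ p ∈ S, (-((u - ((p : ℕ) : ℂ))⁻¹ *
            (if c p = a p.castSucc ∧ shp hkn σ p = a p.succ then (1 : ℂ) else 0)))) *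
          ∏ p ∈ Finset.univ \ S,
            (if a p.castSucc = a p.succ ∧ c p = shp hkn σ p then (1 : ℂ) else 0)
      else 0)
    = (-1) ^ S.card * W0 hkn u c i j σ S := by
  set A : Fin (k + 1) → Fin (NN n) := fun q => pathA i (shp hkn σ) S (q : ℕ) with hA
  have h0 : A 0 = i := by
    show pathA i (shp hkn σ) S ((0 : Fin (k+1)) : ℕ) = i
    rw [Fin.val_zero]
    rfl
  have hlast : A (Fin.last k) = pathA i (shp hkn σ) S k := by
    show pathA i (shp hkn σ) S ((Fin.last k : Fin (k+1)) : ℕ) = _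
    rw [Fin.val_last]
  rw [Finset.sum_eq_single A]
  · by_cases hj' : pathA i (shp hkn σ) S k = j
    · rw [if_pos ⟨h0, by rw [hlast, hj']⟩, W0, if_pos hj']
      have e1 : (∏ p ∈ S, (-((u - ((p : ℕ) : ℂ))⁻¹ *
            (if c p = A p.castSucc ∧ shp hkn σ p = A p.succ then (1 : ℂ) else 0))))
          = (-1) ^ S.card * ∏ p ∈ S, ((u - ((p : ℕ) : ℂ))⁻¹ *
            (if c p = pathA i (shp hkn σ) S (p : ℕ) then (1 : ℂ) else 0)) := by
        rw [← Finset.prod_const (-1 : ℂ), ← Finset.prod_mul_distrib]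
        apply Finset.prod_congr rfl
        intro p hp
        have hcs : A p.castSucc = pathA i (shp hkn σ) S (p : ℕ) := by
          show pathA i (shp hkn σ) S ((p.castSucc : Fin (k+1)) : ℕ) = _
          rw [Fin.coe_castSucc]
        have hsc : A p.succ = shp hkn σ p := by
          show pathA i (shp hkn σ) S ((p.succ : Fin (k+1)) : ℕ) = _
          rw [Fin.val_succ, pathA_succ_of_mem p.isLt (by simpa using hp)]
        rw [hcs, hsc]
        simp only [and_true]
        ring
      have e2 : (∏ p ∈ Finset.univ \ S,
            (if A p.castSucc = A p.succ ∧ c p = shp hkn σ p then (1 : ℂ) else 0))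
          = ∏ p ∈ Finset.univ \ S, (if c p = shp hkn σ p then (1 : ℂ) else 0) := by
        apply Finset.prod_congr rfl
        intro p hp
        have hps : p ∉ S := (Finset.mem_sdiff.mp hp).2
        have hcs : A p.castSucc = A p.succ := by
          show pathA i (shp hkn σ) S ((p.castSucc : Fin (k+1)) : ℕ)
            = pathA i (shp hkn σ) S ((p.succ : Fin (k+1)) : ℕ)
          rw [Fin.coe_castSucc, Fin.val_succ,
            pathA_succ_of_not_mem p.isLt (by simpa using hps)]
        simp only [hcs, true_and]
      rw [e1, e2, mul_assoc]
    · rw [if_neg, W0, if_neg hj', mul_zero]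
      rintro ⟨-, hl⟩
      exact hj' (by rw [← hlast, hl])
  · intro b _ hb
    by_cases hcond : b 0 = i ∧ b (Fin.last k) = j
    swap
    · rw [if_neg hcond]
    rw [if_pos hcond]
    by_contra hne
    have hp12 := mul_ne_zero_iff.mp hne
    have key1 : ∀ p ∈ S, shp hkn σ p = b p.succ := by
      intro p hp
      have hfac := Finset.prod_ne_zero_iff.mp hp12.1 p hp
      by_contra hne2
      apply hfac
      rw [if_neg (by tauto), mul_zero, neg_zero]
    have key2 : ∀ p : Fin k, p ∉ S → b p.castSucc = b p.succ := by
      intro p hp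
      have hmem : p ∈ Finset.univ \ S := by simp [hp]
      have hfac := Finset.prod_ne_zero_iff.mp hp12.2 p hmem
      by_contra hne2
      apply hfac
      rw [if_neg (by tauto)]
    apply hb
    funext q
    have main : ∀ m : ℕ, ∀ hm : m < k + 1, b ⟨m, hm⟩ = pathA i (shp hkn σ) S m := by
      intro m
      induction m with
      | zero =>
        intro hm
        rw [show (⟨0, hm⟩ : Fin (k+1)) = 0 from Fin.ext (by simp)]
        exact hcond.1
      | succ m ih =>
        intro hm
        have hmk : m < k := by omega
        by_cases hs : (⟨m, hmk⟩ : Fin k) ∈ S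
        · rw [pathA_succ_of_mem hmk hs]
          exact (key1 _ hs).symm
        · rw [pathA_succ_of_not_mem hmk hs, ← ih (by omega)]
          exact (key2 _ hs).symm
    conv_lhs => rw [← Fin.eta q q.isLt]
    exact main q.val q.isLt
  · intro h
    exact absurd (Finset.mem_univ A) h

lemma sgnC_mul_swap {p' q : Fin k} (h : p' ≠ q) (σ : Equiv.Perm (Fin k)) :
    sgnC (σ * Equiv.swap p' q) = - sgnC σ := by
  unfold sgnC
  rw [map_mul, Equiv.Perm.sign_swap h]
  simp

lemma W0_erase (hkn : k ≤ NN n) (u : ℂ) (c : Fin k → Fin (NN n)) (i j : Fin (NN n))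
    (σ : Equiv.Perm (Fin k)) (S : Finset (Fin k)) (q p' : Fin k)
    (hq : q ∈ S) (hqmax : ∀ x ∈ S, x ≤ q)
    (hp' : p' ∈ S.erase q) (hp'max : ∀ x ∈ S.erase q, x ≤ p') :
    W0 hkn u c i j σ S
      = (u - ((q : ℕ) : ℂ))⁻¹ * W0 hkn u c i j (σ * Equiv.swap p' q) (S.erase q) := by
  have hp'q : p' ≠ q := (Finset.mem_erase.mp hp').1
  have hp'S : p' ∈ S := (Finset.mem_erase.mp hp').2
  have hp'lt : (p' : ℕ) < (q : ℕ) := by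
    have := hqmax p' hp'S
    have h2 : (p' : ℕ) ≤ (q : ℕ) := this
    have h3 : (p' : ℕ) ≠ (q : ℕ) := fun h => hp'q (Fin.ext h)
    omega
  set σ' := σ * Equiv.swap p' q with hσ'
  have hsh1 : ∀ p : Fin k, p ≠ p' → p ≠ q → shp hkn σ' p = shp hkn σ p := by
    intro p h1 h2
    unfold shp
    rw [hσ', Equiv.Perm.mul_apply, Equiv.swap_apply_of_ne_of_ne h1 h2]
  have hshp' : shp hkn σ' p' = shp hkn σ q := by
    unfold shp
    rw [hσ', Equiv.Perm.mul_apply, Equiv.swap_apply_left]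
  have hshq : shp hkn σ' q = shp hkn σ p' := by
    unfold shp
    rw [hσ', Equiv.Perm.mul_apply, Equiv.swap_apply_right]
  have hpa : ∀ m : ℕ, m ≤ (p' : ℕ) →
      pathA i (shp hkn σ) S m = pathA i (shp hkn σ') (S.erase q) m := by
    intro m hm
    apply pathA_congr
    · intro p hp
      have hpq : p ≠ q := fun h => by subst h; omega
      simp [Finset.mem_erase, hpq]
    · intro p hpS hp
      have h1 : p ≠ p' := fun h => by subst h; omega
      have h2 : p ≠ q := fun h => by subst h; omega
      exact (hsh1 p h1 h2).symm
  have hpb : ∀ m : ℕ, (p' : ℕ) < m → m ≤ (q : ℕ) →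
      pathA i (shp hkn σ) S m = shp hkn σ p' := by
    intro m h1 h2
    apply pathA_eval hp'S h1
    intro x hx hxm
    have hxq : x ≠ q := fun h => by subst h; omega
    exact hp'max x (Finset.mem_erase.mpr ⟨hxq, hx⟩)
  have hpc : ∀ m : ℕ, (q : ℕ) < m → pathA i (shp hkn σ) S m = shp hkn σ q := by
    intro m h1
    exact pathA_eval hq h1 (fun x hx _ => hqmax x hx)
  have hpd : ∀ m : ℕ, (p' : ℕ) < m →
      pathA i (shp hkn σ') (S.erase q) m = shp hkn σ q := by
    intro m h1
    rw [pathA_eval hp' h1 (fun x hx _ => hp'max x hx), hshp']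
  unfold W0
  rw [hpc k q.isLt, hpd k p'.isLt]
  by_cases hcnd : shp hkn σ q = j
  swap
  · rw [if_neg hcnd, if_neg hcnd, mul_zero]
  rw [if_pos hcnd, if_pos hcnd]
  rw [← Finset.mul_prod_erase S _ hq]
  have e1 : (∏ p ∈ S.erase q, ((u - ((p : ℕ) : ℂ))⁻¹ *
        (if c p = pathA i (shp hkn σ) S (p : ℕ) then (1 : ℂ) else 0)))
      = ∏ p ∈ S.erase q, ((u - ((p : ℕ) : ℂ))⁻¹ *
        (if c p = pathA i (shp hkn σ') (S.erase q) (p : ℕ) then (1 : ℂ) else 0)) := by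
    apply Finset.prod_congr rfl
    intro p hp
    have : (p : ℕ) ≤ (p' : ℕ) := hp'max p hp
    rw [hpa (p : ℕ) this]
  have hins : Finset.univ \ S.erase q = insert q (Finset.univ \ S) := by
    ext x
    simp only [Finset.mem_sdiff, Finset.mem_univ, true_and, Finset.mem_erase,
      Finset.mem_insert, not_and]
    constructor
    · intro h
      by_cases hxq : x = q
      · exact Or.inl hxq
      · exact Or.inr (fun hxS => (h hxq) hxS)
    · intro h hxq
      rcases h with h | h
      · exact absurd h hxq
      · exact h
  have e2 : (∏ p ∈ Finset.univ \ S.erase q, (if c p = shp hkn σ' p then (1 : ℂ) else 0))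
      = (if c q = shp hkn σ p' then (1 : ℂ) else 0) *
          ∏ p ∈ Finset.univ \ S, (if c p = shp hkn σ p then (1 : ℂ) else 0) := by
    rw [hins, Finset.prod_insert (by simp [hq]), hshq]
    congr 1
    apply Finset.prod_congr rfl
    intro p hp
    have hps : p ∉ S := (Finset.mem_sdiff.mp hp).2
    rw [hsh1 p (fun h => hps (h ▸ hp'S)) (fun h => hps (h ▸ hq))]
  rw [e1, e2]
  have hqm : pathA i (shp hkn σ) S (q : ℕ) = shp hkn σ p' := hpb (q : ℕ) hp'lt le_rfl
  rw [hqm]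
  ring

lemma GG_erase (hkn : k ≤ NN n) (u : ℂ) (c : Fin k → Fin (NN n)) (i j : Fin (NN n))
    (S : Finset (Fin k)) (q p' : Fin k)
    (hq : q ∈ S) (hqmax : ∀ x ∈ S, x ≤ q)
    (hp' : p' ∈ S.erase q) (hp'max : ∀ x ∈ S.erase q, x ≤ p') :
    GG hkn u c i j S = -(u - ((q : ℕ) : ℂ))⁻¹ * GG hkn u c i j (S.erase q) := by
  have hp'q : p' ≠ q := (Finset.mem_erase.mp hp').1
  unfold GG
  have step : ∀ σ : Equiv.Perm (Fin k),
      sgnC σ * W0 hkn u c i j σ S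
        = -(u - ((q : ℕ) : ℂ))⁻¹ *
            (sgnC (σ * Equiv.swap p' q) * W0 hkn u c i j (σ * Equiv.swap p' q) (S.erase q)) := by
    intro σ
    rw [W0_erase hkn u c i j σ S q p' hq hqmax hp' hp'max, sgnC_mul_swap hp'q]
    ring
  rw [Finset.sum_congr rfl (fun σ _ => step σ), ← Finset.mul_sum]
  congr 1
  exact Equiv.sum_comp (Equiv.mulRight (Equiv.swap p' q))
    (fun τ => sgnC τ * W0 hkn u c i j τ (S.erase q))

lemma GG_closed (hkn : k ≤ NN n) (u : ℂ) (c : Fin k → Fin (NN n)) (i j : Fin (NN n)) :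
    ∀ N : ℕ, ∀ S : Finset (Fin k), S.card = N → ∀ hS : S.Nonempty,
      GG hkn u c i j S
        = (-1) ^ (S.card - 1) * (∏ p ∈ S.erase (S.min' hS), (u - ((p : ℕ) : ℂ))⁻¹) *
            GG hkn u c i j {S.min' hS} := by
  intro N
  induction N using Nat.strong_induction_on with
  | _ N ih =>
    intro S hcard hS
    rcases Nat.lt_or_ge S.card 2 with h2 | h2
    · have h1 : S.card = 1 := by
        have := Finset.card_pos.mpr hS; omega
      obtain ⟨m, hm⟩ := Finset.card_eq_one.mp h1
      subst hm
      simp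
    · have hq : S.max' hS ∈ S := Finset.max'_mem S hS
      have hminmax : S.min' hS < S.max' hS := Finset.min'_lt_max'_of_card S (by omega)
      have hcard' : (S.erase (S.max' hS)).card = S.card - 1 := Finset.card_erase_of_mem hq
      have hS' : (S.erase (S.max' hS)).Nonempty := Finset.card_pos.mp (by omega)
      have hminS : S.min' hS ∈ S.erase (S.max' hS) :=
        Finset.mem_erase.mpr ⟨ne_of_lt hminmax, Finset.min'_mem S hS⟩
      have hminav : (S.erase (S.max' hS)).min' hS' = S.min' hS := by
        apply le_antisymm
        · exact Finset.min'_le _ _ hminS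
        · exact Finset.le_min' _ _ _
            (fun y hy => Finset.min'_le S y (Finset.mem_of_mem_erase hy))
      have hrec := GG_erase hkn u c i j S (S.max' hS) ((S.erase (S.max' hS)).max' hS')
        hq (fun x hx => Finset.le_max' S x hx)
        (Finset.max'_mem _ hS') (fun x hx => Finset.le_max' _ x hx)
      rw [hrec, ih (S.card - 1) (by omega) _ hcard' hS', hminav]
      have hqem : S.max' hS ∈ S.erase (S.min' hS) :=
        Finset.mem_erase.mpr ⟨(ne_of_lt hminmax).symm, hq⟩
      rw [← Finset.mul_prod_erase _ _ hqem, Finset.erase_right_comm]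
      rw [hcard']
      have hc1 : (-1 : ℂ) ^ (S.card - 1) = (-1) ^ (S.card - 1 - 1) * (-1) := by
        rw [← pow_succ]
        congr 1
        omega
      rw [hc1]
      ring

lemma GG_empty (hkn : k ≤ NN n) (u : ℂ) (c : Fin k → Fin (NN n)) {i j : Fin (NN n)}
    (hij : i ≠ j) : GG hkn u c i j ∅ = 0 := by
  unfold GG W0
  apply Finset.sum_eq_zero
  intro σ _
  rw [pathA_empty, if_neg hij, mul_zero]

lemma GG_single (hkn : k ≤ NN n) (u : ℂ) (c : Fin k → Fin (NN n)) (i j : Fin (NN n))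
    (hu0 : ∀ p : ℕ, p < k → u - (p : ℂ) ≠ 0) (m : Fin k) :
    (u - ((m : ℕ) : ℂ)) * GG hkn u c i j {m}
      = ∑ σ : Equiv.Perm (Fin k), sgnC σ *
          (if c m = i ∧ shp hkn σ m = j then
            ∏ p ∈ Finset.univ.erase m, (if c p = shp hkn σ p then (1 : ℂ) else 0)
          else 0) := by
  unfold GG
  rw [Finset.mul_sum]
  apply Finset.sum_congr rfl
  intro σ _
  unfold W0
  have h1 : pathA i (shp hkn σ) {m} k = shp hkn σ m :=
    pathA_eval (Finset.mem_singleton_self m) m.isLt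
      (fun x hx _ => le_of_eq (Finset.mem_singleton.mp hx))
  have h2 : pathA i (shp hkn σ) {m} (m : ℕ) = i := by
    rw [pathA_stable 0 (m : ℕ) (Nat.zero_le _) (fun x hx => Or.inr (by
      rw [Finset.mem_singleton] at hx
      rw [hx]))]
    rfl
  rw [h1, Finset.prod_singleton, h2]
  have herase : Finset.univ \ ({m} : Finset (Fin k)) = Finset.univ.erase m := by
    ext x
    simp [Finset.mem_erase, and_comm]
  rw [herase]
  by_cases hc : shp hkn σ m = j
  · rw [if_pos hc]
    by_cases hcm : c m = i
    · rw [if_pos hcm, if_pos ⟨hcm, hc⟩]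
      have hne := hu0 (m : ℕ) m.isLt
      field_simp
    · rw [if_neg hcm, if_neg (by tauto)]
      simp
  · rw [if_neg hc, if_neg (by tauto)]
    simp

lemma tele {k : ℕ} (u : ℂ) (hk1 : 1 ≤ k) (hu0 : ∀ p : ℕ, p < k → u - (p : ℂ) ≠ 0) :
    ∀ t : ℕ, ∀ m : Fin k, (m : ℕ) = k - 1 - t →
      (∏ p ∈ Finset.Ioi m, ((u - ((p : ℕ) : ℂ))⁻¹ + 1)) * (u - ((k - 1 : ℕ) : ℂ))
        = u - ((m : ℕ) : ℂ) := by
  intro t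
  induction t with
  | zero =>
    intro m hm
    have hm' : (m : ℕ) = k - 1 := by omega
    have hIoi : Finset.Ioi m = ∅ := by
      ext x
      simp only [Finset.mem_Ioi, Finset.notMem_empty, iff_false, not_lt]
      have : (x : ℕ) < k := x.isLt
      exact Fin.le_def.mpr (by omega)
    rw [hIoi, Finset.prod_empty, one_mul, hm']
  | succ t ih =>
    intro m hm
    by_cases heq : (m : ℕ) = k - 1 - t
    · exact ih m heq
    · have hmk : (m : ℕ) + 1 < k := by omega
      set m' : Fin k := ⟨(m : ℕ) + 1, hmk⟩ with hm'
      have hsplit : Finset.Ioi m = insert m' (Finset.Ioi m') := by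
        ext x
        simp only [Finset.mem_Ioi, Finset.mem_insert]
        rw [Fin.lt_def, Fin.lt_def, Fin.ext_iff]
        have : (m' : ℕ) = (m : ℕ) + 1 := rfl
        omega
      rw [hsplit, Finset.prod_insert (by simp), mul_assoc,
        ih m' (by simp only [hm']; omega)]
      have hne : u - ((m' : ℕ) : ℂ) ≠ 0 := hu0 _ m'.isLt
      have hcoe : ((m' : ℕ) : ℂ) = ((m : ℕ) : ℂ) + 1 := by
        rw [show (m' : ℕ) = (m : ℕ) + 1 from rfl]
        push_cast
        ring
      rw [hcoe] at hne ⊢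
      field_simp
      ring

lemma inv_sum (hkn : k ≤ NN n) (c : Fin k → Fin (NN n)) {i j : Fin (NN n)}
    (hij : i < j) :
    ∑ x : Fin k × Equiv.Perm (Fin k), sgnC x.2 *
      (if c x.1 = i ∧ shp hkn x.2 x.1 = j then
        ∏ p ∈ Finset.univ.erase x.1, (if c p = shp hkn x.2 p then (1 : ℂ) else 0)
      else 0) = 0 := by
  classical
  have hijne : i ≠ j := ne_of_lt hij
  set f : Fin k × Equiv.Perm (Fin k) → ℂ := fun x => sgnC x.2 *
      (if c x.1 = i ∧ shp hkn x.2 x.1 = j then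
        ∏ p ∈ Finset.univ.erase x.1, (if c p = shp hkn x.2 p then (1 : ℂ) else 0)
      else 0) with hf
  have hfacts : ∀ x : Fin k × Equiv.Perm (Fin k), f x ≠ 0 →
      (c x.1 = i ∧ shp hkn x.2 x.1 = j) ∧ (∀ p ∈ Finset.univ.erase x.1, c p = shp hkn x.2 p)
        ∧ f x = sgnC x.2 := by
    intro x hx
    rw [hf] at hx
    simp only at hx
    have hcond : c x.1 = i ∧ shp hkn x.2 x.1 = j := by
      by_contra hcond
      rw [if_neg hcond, mul_zero] at hx
      exact hx rfl
    rw [if_pos hcond] at hx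
    have hprod := (mul_ne_zero_iff.mp hx).2
    have hall : ∀ p ∈ Finset.univ.erase x.1, c p = shp hkn x.2 p := by
      intro p hp
      have := Finset.prod_ne_zero_iff.mp hprod p hp
      by_contra hne
      rw [if_neg hne] at this
      exact this rfl
    refine ⟨hcond, hall, ?_⟩
    rw [hf]
    simp only
    rw [if_pos hcond, Finset.prod_eq_one (fun p hp => by rw [if_pos (hall p hp)]), mul_one]
  have hik0 : ∀ x : Fin k × Equiv.Perm (Fin k), f x ≠ 0 → (i : ℕ) < k := by
    intro x hx
    have h := (hfacts x hx).1.2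
    have h1 : ((shp hkn x.2 x.1 : Fin (NN n)) : ℕ) = (x.2 x.1 : ℕ) := rfl
    have h2 : (x.2 x.1 : ℕ) < k := (x.2 x.1).isLt
    have h3 : (i : ℕ) < (j : ℕ) := hij
    have h4 := congrArg Fin.val h
    omega
  set g : (x : Fin k × Equiv.Perm (Fin k)) → x ∈ (Finset.univ : Finset _) →
      Fin k × Equiv.Perm (Fin k) := fun x _ =>
    if h : (i : ℕ) < k then
      (x.2⁻¹ ⟨(i : ℕ), h⟩, x.2 * Equiv.swap x.1 (x.2⁻¹ ⟨(i : ℕ), h⟩))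
    else x with hg
  have gdef : ∀ (h : (i : ℕ) < k) (y : Fin k × Equiv.Perm (Fin k)) (hy : y ∈ Finset.univ),
      g y hy = (y.2⁻¹ ⟨(i : ℕ), h⟩, y.2 * Equiv.swap y.1 (y.2⁻¹ ⟨(i : ℕ), h⟩)) := by
    intro h y hy
    simp only [hg]
    rw [dif_pos h]
  have gdef' : ∀ (h : ¬ (i : ℕ) < k) (y : Fin k × Equiv.Perm (Fin k)) (hy : y ∈ Finset.univ),
      g y hy = y := by
    intro h y hy
    simp only [hg]
    rw [dif_neg h]
  have hginv : ∀ x (hx : x ∈ (Finset.univ : Finset (Fin k × Equiv.Perm (Fin k)))),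
      g (g x hx) (Finset.mem_univ _) = x := by
    intro x hx
    by_cases h : (i : ℕ) < k
    · rw [gdef h x hx, gdef h _ (Finset.mem_univ _)]
      set q := x.2⁻¹ ⟨(i : ℕ), h⟩ with hq
      simp only
      have h2 : (x.2 * Equiv.swap x.1 q)⁻¹ ⟨(i : ℕ), h⟩ = x.1 := by
        rw [mul_inv_rev, Equiv.Perm.mul_apply, ← hq, Equiv.swap_inv, Equiv.swap_apply_right]
      rw [h2, Equiv.swap_comm q x.1, mul_assoc, Equiv.swap_mul_self, mul_one]
    · rw [gdef' h x hx, gdef' h _ (Finset.mem_univ _)]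
  have hneg : ∀ x (hx : x ∈ (Finset.univ : Finset _)), f x ≠ 0 → f (g x hx) = -f x := by
    intro x hx hfx
    obtain ⟨⟨hcm, hsm⟩, hall, hfval⟩ := hfacts x hfx
    have hik := hik0 x hfx
    rw [gdef hik x hx]
    set q := x.2⁻¹ ⟨(i : ℕ), hik⟩ with hq
    have hshq : shp hkn x.2 q = i := by
      unfold shp
      rw [hq, ← Equiv.Perm.mul_apply, mul_inv_cancel, Equiv.Perm.one_apply]
      exact Fin.ext rfl
    have hqne : q ≠ x.1 := by
      intro h
      rw [h] at hshq
      rw [hshq] at hsm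
      exact hijne hsm
    set σ' := x.2 * Equiv.swap x.1 q with hσ'
    have hsh'q : shp hkn σ' q = j := by
      unfold shp
      rw [hσ', Equiv.Perm.mul_apply, Equiv.swap_apply_right]
      exact hsm
    have hsh'm : shp hkn σ' x.1 = i := by
      unfold shp
      rw [hσ', Equiv.Perm.mul_apply, Equiv.swap_apply_left]
      exact hshq
    have hsh'o : ∀ p : Fin k, p ≠ x.1 → p ≠ q → shp hkn σ' p = shp hkn x.2 p := by
      intro p h1 h2
      unfold shp
      rw [hσ', Equiv.Perm.mul_apply, Equiv.swap_apply_of_ne_of_ne h1 h2]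
    have hcq : c q = i := by
      rw [hall q (Finset.mem_erase.mpr ⟨hqne, Finset.mem_univ q⟩), hshq]
    have hcond' : c q = i ∧ shp hkn σ' q = j := ⟨hcq, hsh'q⟩
    have hall' : ∀ p ∈ Finset.univ.erase q, c p = shp hkn σ' p := by
      intro p hp
      have hpq : p ≠ q := (Finset.mem_erase.mp hp).1
      by_cases hpm : p = x.1
      · rw [hpm, hsh'm, hcm]
      · rw [hsh'o p hpm hpq]
        exact hall p (Finset.mem_erase.mpr ⟨hpm, Finset.mem_univ p⟩)
    have hfval' : f (q, σ') = sgnC σ' := by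
      rw [hf]
      simp only
      rw [if_pos hcond', Finset.prod_eq_one (fun p hp => by rw [if_pos (hall' p hp)]),
        mul_one]
    rw [hfval', hfval, hσ', sgnC_mul_swap (Ne.symm hqne)]
  refine Finset.sum_involution g ?_ ?_ (fun a ha => Finset.mem_univ _) hginv
  · intro x hx
    show f x + f (g x hx) = 0
    by_cases hfx : f x = 0
    · by_cases hgx : f (g x hx) = 0
      · rw [hfx, hgx, add_zero]
      · have h2 := hneg (g x hx) (Finset.mem_univ _) hgx
        have h3 : g (g x hx) (Finset.mem_univ _) = x := hginv x hx
        rw [h3] at h2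
        rw [h2]
        ring
    · rw [hneg x hx hfx]
      ring
  · intro x hx hfx
    have hfx' : f x ≠ 0 := hfx
    have hik := hik0 x hfx'
    obtain ⟨⟨hcm, hsm⟩, hall, hfval⟩ := hfacts x hfx'
    rw [gdef hik x hx]
    intro heq
    have h1 : x.2⁻¹ ⟨(i : ℕ), hik⟩ = x.1 := congrArg Prod.fst heq
    have hshq : shp hkn x.2 (x.2⁻¹ ⟨(i : ℕ), hik⟩) = i := by
      unfold shp
      rw [← Equiv.Perm.mul_apply, mul_inv_cancel, Equiv.Perm.one_apply]
      exact Fin.ext rfl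
    rw [h1] at hshq
    rw [hshq] at hsm
    exact hijne hsm

end XiAux

/-- For `1 ≤ k ≤ n`, the antisymmetric vector
`ξ_k = Σ_{σ ∈ S_k} sgn(σ) e_{σ(1)} ⊗ ⋯ ⊗ e_{σ(k)}` in `(ℂ^{1|2n})^{⊗k}` satisfies
`T_{ij}(u) ξ_k = 0` for all `1 ≤ i < j ≤ n+1` (stated for all `u` away from the poles of the
matrix entries). -/
theorem xi_annihilated
    (n k : ℕ) (hk1 : 1 ≤ k) (hkn : k ≤ n) (u : ℂ)
    (hu : ∀ p : ℕ, p < k → u - (p : ℂ) ≠ 0 ∧ u - (p : ℂ) + kappa n ≠ 0)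
    (i j : Fin (NN n)) (hij : i < j) (hj : (j : ℕ) ≤ n) :
    Matrix.mulVec (TopMat n k u i j) (xiVec n k (le_NN hkn)) = 0 := by
  classical
  have hu0 : ∀ p : ℕ, p < k → u - (p : ℂ) ≠ 0 := fun p hp => (hu p hp).1
  have hin : (i : ℕ) < n := lt_of_lt_of_le hij hj
  have hijne : i ≠ j := ne_of_lt hij
  funext c
  simp only [Pi.zero_apply, Matrix.mulVec, dotProduct]
  have step1 : (∑ d : Fin k → Fin (NN n), TopMat n k u i j c d * xiVec n k (le_NN hkn) d)
      = ∑ σ : Equiv.Perm (Fin k), sgnC σ * TopMat n k u i j c (shp (le_NN hkn) σ) := by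
    unfold xiVec
    simp_rw [Finset.mul_sum]
    rw [Finset.sum_comm]
    apply Finset.sum_congr rfl
    intro σ _
    rw [Finset.sum_eq_single (shp (le_NN hkn) σ)]
    · rw [if_pos (show shp (le_NN hkn) σ = fun p => Fin.castLE (le_NN hkn) (σ p) from rfl)]
      unfold sgnC
      ring
    · intro b _ hb
      rw [if_neg (show ¬(b = fun p => Fin.castLE (le_NN hkn) (σ p)) from hb), mul_zero,
        mul_zero]
    · intro h
      exact absurd (Finset.mem_univ _) h
  have step2 : ∀ σ : Equiv.Perm (Fin k),
      TopMat n k u i j c (shp (le_NN hkn) σ)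
        = ∑ S ∈ (Finset.univ : Finset (Fin k)).powerset,
            (-1 : ℂ) ^ S.card * W0 (le_NN hkn) u c i j σ S := by
    intro σ
    rw [topmat_eq hkn u c hin σ]
    have e1 : ∀ a : Fin (k + 1) → Fin (NN n),
        (if a 0 = i ∧ a (Fin.last k) = j then
          ∏ p : Fin k,
            (-((u - ((p : ℕ) : ℂ))⁻¹ *
                (if c p = a p.castSucc ∧ shp (le_NN hkn) σ p = a p.succ then (1 : ℂ) else 0))
              + (if a p.castSucc = a p.succ ∧ c p = shp (le_NN hkn) σ p then (1 : ℂ) else 0))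
        else 0)
        = ∑ S ∈ (Finset.univ : Finset (Fin k)).powerset,
            (if a 0 = i ∧ a (Fin.last k) = j then
              (∏ p ∈ S, (-((u - ((p : ℕ) : ℂ))⁻¹ *
                (if c p = a p.castSucc ∧ shp (le_NN hkn) σ p = a p.succ then (1 : ℂ) else 0))))
                * ∏ p ∈ Finset.univ \ S,
                    (if a p.castSucc = a p.succ ∧ c p = shp (le_NN hkn) σ p then (1 : ℂ) else 0)
            else 0) := by
      intro a
      rw [Finset.prod_add]
      split_ifs with h
      · rfl
      · exact Finset.sum_const_zero.symm
    rw [Finset.sum_congr rfl (fun a _ => e1 a), Finset.sum_comm]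
    apply Finset.sum_congr rfl
    intro S _
    exact collapse (le_NN hkn) u c i j σ S
  rw [step1]
  calc ∑ σ : Equiv.Perm (Fin k), sgnC σ * TopMat n k u i j c (shp (le_NN hkn) σ)
      = ∑ σ : Equiv.Perm (Fin k), ∑ S ∈ (Finset.univ : Finset (Fin k)).powerset,
          sgnC σ * ((-1 : ℂ) ^ S.card * W0 (le_NN hkn) u c i j σ S) := by
        apply Finset.sum_congr rfl
        intro σ _
        rw [step2 σ, Finset.mul_sum]
    _ = ∑ S ∈ (Finset.univ : Finset (Fin k)).powerset, (-1 : ℂ) ^ S.card * GG (le_NN hkn) u c i j S := by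
        rw [Finset.sum_comm]
        apply Finset.sum_congr rfl
        intro S _
        rw [GG, Finset.mul_sum]
        apply Finset.sum_congr rfl
        intro σ _
        ring
    _ = ∑ S ∈ (Finset.univ : Finset (Fin k)).powerset, ∑ m : Fin k,
          (if m ∈ S ∧ ∀ x ∈ S, m ≤ x then
            -(∏ p ∈ S.erase m, (u - ((p : ℕ) : ℂ))⁻¹) * GG (le_NN hkn) u c i j {m}
          else 0) := by
        apply Finset.sum_congr rfl
        intro S _
        by_cases hSne : S.Nonempty
        · rw [Finset.sum_eq_single (S.min' hSne)]
          · rw [if_pos ⟨Finset.min'_mem S hSne, fun x hx => Finset.min'_le S x hx⟩]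
            rw [GG_closed (le_NN hkn) u c i j S.card S rfl hSne]
            have hpow : (-1 : ℂ) ^ S.card * (-1 : ℂ) ^ (S.card - 1) = -1 := by
              rw [← pow_add]
              have hc : S.card + (S.card - 1) = 2 * (S.card - 1) + 1 := by
                have := Finset.card_pos.mpr hSne
                omega
              rw [hc, pow_succ, pow_mul]
              norm_num
            set P := ∏ p ∈ S.erase (S.min' hSne), (u - ((p : ℕ) : ℂ))⁻¹ with hP
            set G := GG (le_NN hkn) u c i j {S.min' hSne} with hG
            have hrw : (-1 : ℂ) ^ S.card * ((-1 : ℂ) ^ (S.card - 1) * P * G)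
                = ((-1 : ℂ) ^ S.card * (-1 : ℂ) ^ (S.card - 1)) * (P * G) := by ring
            rw [hrw, hpow]
            ring
          · intro m _ hm
            rw [if_neg]
            rintro ⟨h1, h2⟩
            exact hm (le_antisymm (h2 _ (Finset.min'_mem S hSne)) (Finset.min'_le S m h1))
          · intro h
            exact absurd (Finset.mem_univ _) h
        · rw [Finset.not_nonempty_iff_eq_empty] at hSne
          subst hSne
          rw [Finset.card_empty, pow_zero, one_mul, GG_empty (le_NN hkn) u c hijne]
          symm
          apply Finset.sum_eq_zero
          intro m _
          rw [if_neg (by rintro ⟨h1, -⟩; exact absurd h1 (Finset.notMem_empty m))]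
    _ = ∑ m : Fin k, -GG (le_NN hkn) u c i j {m} *
          ∏ p ∈ Finset.Ioi m, ((u - ((p : ℕ) : ℂ))⁻¹ + 1) := by
        rw [Finset.sum_comm]
        apply Finset.sum_congr rfl
        intro m _
        have hres : (∑ S ∈ (Finset.univ : Finset (Fin k)).powerset, (if m ∈ S ∧ ∀ x ∈ S, m ≤ x then
              -(∏ p ∈ S.erase m, (u - ((p : ℕ) : ℂ))⁻¹) * GG (le_NN hkn) u c i j {m}
            else 0))
            = ∑ S ∈ (Finset.Ici m).powerset, (if m ∈ S ∧ ∀ x ∈ S, m ≤ x then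
              -(∏ p ∈ S.erase m, (u - ((p : ℕ) : ℂ))⁻¹) * GG (le_NN hkn) u c i j {m}
            else 0) := by
          symm
          apply Finset.sum_subset (Finset.powerset_mono.mpr (Finset.subset_univ _))
          intro S _ hS2
          rw [if_neg]
          rintro ⟨h1, h2⟩
          apply hS2
          rw [Finset.mem_powerset]
          intro x hx
          rw [Finset.mem_Ici]
          exact h2 x hx
        rw [hres, ← Finset.Ioi_insert m,
          Finset.sum_powerset_insert (by simp : m ∉ Finset.Ioi m)]
        have hz : (∑ S ∈ (Finset.Ioi m).powerset, (if m ∈ S ∧ ∀ x ∈ S, m ≤ x then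
              -(∏ p ∈ S.erase m, (u - ((p : ℕ) : ℂ))⁻¹) * GG (le_NN hkn) u c i j {m}
            else 0)) = 0 := by
          apply Finset.sum_eq_zero
          intro S hS
          rw [if_neg]
          rintro ⟨h1, -⟩
          have := Finset.mem_powerset.mp hS h1
          simp at this
        rw [hz, zero_add]
        have hps : (∏ p ∈ Finset.Ioi m, ((u - ((p : ℕ) : ℂ))⁻¹ + 1))
            = ∑ S ∈ (Finset.Ioi m).powerset, ∏ p ∈ S, (u - ((p : ℕ) : ℂ))⁻¹ := by
          rw [Finset.prod_add]
          exact Finset.sum_congr rfl (fun S _ => by rw [Finset.prod_const_one, mul_one])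
        rw [hps, Finset.mul_sum]
        apply Finset.sum_congr rfl
        intro S hS
        have hmS : m ∉ S := by
          intro h
          have := Finset.mem_powerset.mp hS h
          simp at this
        have hcond : ∀ x ∈ insert m S, m ≤ x := by
          intro x hx
          rcases Finset.mem_insert.mp hx with h | h
          · exact le_of_eq h.symm
          · exact le_of_lt (Finset.mem_Ioi.mp (Finset.mem_powerset.mp hS h))
        rw [if_pos ⟨Finset.mem_insert_self m S, hcond⟩, Finset.erase_insert hmS]
        ring
    _ = 0 := by
        have hk1' : k - 1 < k := by omega
        have hne : u - ((k - 1 : ℕ) : ℂ) ≠ 0 := hu0 (k - 1) hk1'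
        have hmul : (∑ m : Fin k, -GG (le_NN hkn) u c i j {m} *
              ∏ p ∈ Finset.Ioi m, ((u - ((p : ℕ) : ℂ))⁻¹ + 1)) * (u - ((k - 1 : ℕ) : ℂ))
            = 0 := by
          rw [Finset.sum_mul]
          have hterm : ∀ m : Fin k,
              (-GG (le_NN hkn) u c i j {m} *
                  ∏ p ∈ Finset.Ioi m, ((u - ((p : ℕ) : ℂ))⁻¹ + 1)) * (u - ((k - 1 : ℕ) : ℂ))
                = -((u - ((m : ℕ) : ℂ)) * GG (le_NN hkn) u c i j {m}) := by
            intro m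
            have ht := tele u hk1 hu0 (k - 1 - (m : ℕ)) m (by have := m.isLt; omega)
            calc (-GG (le_NN hkn) u c i j {m} *
                  ∏ p ∈ Finset.Ioi m, ((u - ((p : ℕ) : ℂ))⁻¹ + 1)) * (u - ((k - 1 : ℕ) : ℂ))
                = -GG (le_NN hkn) u c i j {m} *
                    ((∏ p ∈ Finset.Ioi m, ((u - ((p : ℕ) : ℂ))⁻¹ + 1)) *
                      (u - ((k - 1 : ℕ) : ℂ))) := by ring
              _ = -((u - ((m : ℕ) : ℂ)) * GG (le_NN hkn) u c i j {m}) := by rw [ht]; ring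
          rw [Finset.sum_congr rfl (fun m _ => hterm m)]
          calc ∑ m : Fin k, -((u - ((m : ℕ) : ℂ)) * GG (le_NN hkn) u c i j {m})
              = -∑ m : Fin k, ∑ σ : Equiv.Perm (Fin k), sgnC σ *
                  (if c m = i ∧ shp (le_NN hkn) σ m = j then
                    ∏ p ∈ Finset.univ.erase m,
                      (if c p = shp (le_NN hkn) σ p then (1 : ℂ) else 0)
                  else 0) := by
                rw [← Finset.sum_neg_distrib]
                apply Finset.sum_congr rfl
                intro m _
                rw [GG_single (le_NN hkn) u c i j hu0 m]
            _ = -∑ x : Fin k × Equiv.Perm (Fin k), sgnC x.2 *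
                  (if c x.1 = i ∧ shp (le_NN hkn) x.2 x.1 = j then
                    ∏ p ∈ Finset.univ.erase x.1,
                      (if c p = shp (le_NN hkn) x.2 p then (1 : ℂ) else 0)
                  else 0) := by
                congr 1
                exact (Fintype.sum_prod_type
                  (f := fun x : Fin k × Equiv.Perm (Fin k) => sgnC x.2 *
                    (if c x.1 = i ∧ shp (le_NN hkn) x.2 x.1 = j then
                      ∏ p ∈ Finset.univ.erase x.1,
                        (if c p = shp (le_NN hkn) x.2 p then (1 : ℂ) else 0)
                    else 0))).symm
            _ = 0 := by
                rw [inv_sum (le_NN hkn) c hij, neg_zero]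
        rcases mul_eq_zero.mp hmul with h | h
        · exact h
        · exact absurd h hne

end OspYangian
end
end
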